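/- arXiv:2305.05353 — 7 statements merged into one kernel-verified Lean document; each statement's English description precedes it below -/
import Mathlib

section
/- For all real a ≥ 1 and all real h with 1 ≤ h ≤ n/a, it holds that η(a·h) ≤ 2a·η(h). -/
open scoped BigOperators Classical
open MeasureTheory

noncomputable section

/-- A finite matroid on ground set `E`, given by its rank function. -/
structure FinMatroid (α : Type*) [DecidableEq α] where
  E : Finset α
  r : Finset α → ℕ
  rank_le_card : ∀ A : Finset α, r A ≤ A.card
  rank_mono : ∀ ⦃A B : Finset α⦄, A ⊆ B → r A ≤ r B
  rank_submod : ∀ A B : Finset α, r (A ∪ B) + r (A ∩ B) ≤ r A + r B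

variable {α : Type*} [DecidableEq α]

/-- Independence in terms of the rank function. -/
def FinMatroid.Indep (M : FinMatroid α) (I : Finset α) : Prop :=
  I ⊆ M.E ∧ M.r I = I.card

/-- The span (closure) of a set. -/
def FinMatroid.span (M : FinMatroid α) (A : Finset α) : Finset α :=
  M.E.filter fun e => M.r (insert e A) = M.r A

/-- `M.D S lam` : the unique inclusion-wise maximal maximizer of `|U| - lam * r U`
over `U ⊆ S`, realized as the union of all maximizers. -/
def FinMatroid.D (M : FinMatroid α) (S : Finset α) (lam : ℝ) : Finset α :=
  (S.powerset.filter fun U =>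
      ∀ V ∈ S.powerset, (V.card : ℝ) - lam * M.r V ≤ (U.card : ℝ) - lam * M.r U).sup id

/-- The rank-density curve of `M`. -/
def FinMatroid.rdCurve (M : FinMatroid α) : ℝ → ℝ := fun t =>
  sSup {lam : ℝ | 0 ≤ lam ∧ t ≤ (M.r (M.D M.E lam) : ℝ)}

/-- Restriction of a matroid to a subset. -/
def FinMatroid.restrict (M : FinMatroid α) (T : Finset α) : FinMatroid α where
  E := M.E ∩ T
  r := fun A => M.r (A ∩ T)
  rank_le_card := fun A =>
    (M.rank_le_card _).trans (Finset.card_le_card Finset.inter_subset_left)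
  rank_mono := fun A B hAB =>
    M.rank_mono (Finset.inter_subset_inter hAB (Finset.Subset.refl T))
  rank_submod := fun A B => by
    have h1 : (A ∪ B) ∩ T = (A ∩ T) ∪ (B ∩ T) := by ext x; simp only [Finset.mem_inter, Finset.mem_union]; tauto
    have h2 : (A ∩ B) ∩ T = (A ∩ T) ∩ (B ∩ T) := by ext x; simp only [Finset.mem_inter]; tauto
    rw [h1, h2]; exact M.rank_submod _ _

/-- `eta n w a` : the expected maximum weight among a uniformly random subset of
`⌊a⌋` of the `n` weights `w`, with value `0` for `a < 1`. -/
def eta (n : ℕ) (w : Fin n → ℝ) (a : ℝ) : ℝ :=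
  if a < 1 then 0 else
    (∑ R ∈ Finset.powersetCard ⌊a⌋.toNat (Finset.univ : Finset (Fin n)),
        R.fold max 0 w) /
      ((Finset.powersetCard ⌊a⌋.toNat (Finset.univ : Finset (Fin n))).card : ℝ)

/-- `FF n w ρ = ∫_0^∞ η(ρ(t)) dt`. -/
def FF (n : ℕ) (w : Fin n → ℝ) (ρ : ℝ → ℝ) : ℝ :=
  ∫ t in Set.Ioi (0 : ℝ), eta n w (ρ t)

/-- The `(a, b)`-downshift of a curve `ρ`. -/
def downshift (ρ : ℝ → ℝ) (a b : ℝ) : ℝ → ℝ := fun t =>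
  let φ : ℝ := if t ≤ 1 then ρ a / b else ρ (a * t) / b
  if 0 < φ ∧ φ < 1 then 1 else φ

/-- `ρt` is an `(a,b)`-approximation of `ρ`: it is non-increasing and nonnegative on
`(0,∞)` and squeezed between the `(a,b)`-downshift of `ρ` and `ρ` on `(0,∞)`. -/
def IsApprox (a b : ℝ) (ρ ρt : ℝ → ℝ) : Prop :=
  AntitoneOn ρt (Set.Ioi 0) ∧ (∀ t, 0 < t → 0 ≤ ρt t) ∧
    ∀ t, 0 < t → downshift ρ a b t ≤ ρt t ∧ ρt t ≤ ρ t

/-- Probability of event `P` for a random subset `S ⊆ N` including each element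
independently with probability `1/2`. -/
def prHalf (N : Finset α) (P : Finset α → Prop) : ℝ :=
  ((N.powerset.filter P).card : ℝ) / 2 ^ N.card



/-- sum of maxima over all j-subsets -/
def sumS (n : ℕ) (w : Fin n → ℝ) (j : ℕ) : ℝ :=
  ∑ R ∈ Finset.powersetCard j (Finset.univ : Finset (Fin n)), R.fold max 0 w

def etaN (n : ℕ) (w : Fin n → ℝ) (j : ℕ) : ℝ := sumS n w j / (n.choose j : ℝ)

lemma fold_max_nonneg {n : ℕ} (w : Fin n → ℝ) (R : Finset (Fin n)) :
    0 ≤ R.fold max 0 w := (Finset.le_fold_max 0).2 (Or.inl le_rfl)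

lemma sumS_nonneg (n : ℕ) (w : Fin n → ℝ) (j : ℕ) : 0 ≤ sumS n w j :=
  Finset.sum_nonneg fun R _ => fold_max_nonneg w R

lemma etaN_nonneg (n : ℕ) (w : Fin n → ℝ) (j : ℕ) : 0 ≤ etaN n w j :=
  div_nonneg (sumS_nonneg n w j) (by positivity)

lemma sum_erase_fold_ge {n : ℕ} (w : Fin n → ℝ) (hw : ∀ i, 0 ≤ w i)
    (R : Finset (Fin n)) (hR : R.Nonempty) :
    ((R.card : ℝ) - 1) * R.fold max 0 w ≤ ∑ i ∈ R, (R.erase i).fold max 0 w := by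
  obtain ⟨i₀, hi₀, hmax⟩ := R.exists_max_image w hR
  have hfold : R.fold max 0 w = w i₀ :=
    le_antisymm ((Finset.fold_max_le _).2 ⟨hw i₀, fun x hx => hmax x hx⟩)
      ((Finset.le_fold_max _).2 (Or.inr ⟨i₀, hi₀, le_rfl⟩))
  rw [← Finset.add_sum_erase _ _ hi₀, hfold]
  have h1 : ∀ i ∈ R.erase i₀, w i₀ ≤ (R.erase i).fold max 0 w := by
    intro i hi
    refine (Finset.le_fold_max _).2 (Or.inr ⟨i₀, ?_, le_rfl⟩)
    exact Finset.mem_erase.2 ⟨fun hcon => (Finset.mem_erase.1 hi).1 hcon.symm, hi₀⟩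
  have h2 : ((R.erase i₀).card : ℝ) * w i₀ ≤ ∑ i ∈ R.erase i₀, (R.erase i).fold max 0 w := by
    calc ((R.erase i₀).card : ℝ) * w i₀ = ∑ _i ∈ R.erase i₀, w i₀ := by
          rw [Finset.sum_const, nsmul_eq_mul]
      _ ≤ _ := Finset.sum_le_sum h1
  have hcard : ((R.erase i₀).card : ℝ) = (R.card : ℝ) - 1 := by
    rw [Finset.card_erase_of_mem hi₀]
    have : 1 ≤ R.card := Finset.one_le_card.2 hR
    push_cast [Nat.cast_sub this]
    ring
  have h3 : 0 ≤ (R.erase i₀).fold max 0 w := fold_max_nonneg w _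
  linarith [h2, hcard ▸ h2]

lemma double_count {n : ℕ} (w : Fin n → ℝ) (j : ℕ) :
    ∑ R ∈ Finset.powersetCard (j+1) (Finset.univ : Finset (Fin n)),
        ∑ i ∈ R, (R.erase i).fold max 0 w
      = ((n - j : ℕ) : ℝ) * sumS n w j := by
  rw [Finset.sum_sigma' (Finset.powersetCard (j+1) (Finset.univ : Finset (Fin n)))
      (fun R => R) (fun R i => (R.erase i).fold max 0 w)]
  have key : ∑ x ∈ (Finset.powersetCard (j+1) (Finset.univ : Finset (Fin n))).sigma (fun R => R),
        (x.1.erase x.2).fold max 0 w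
      = ∑ y ∈ (Finset.powersetCard j (Finset.univ : Finset (Fin n))).sigma (fun S => Sᶜ),
        y.1.fold max 0 w := by
    refine Finset.sum_nbij' (fun x => ⟨x.1.erase x.2, x.2⟩) (fun y => ⟨insert y.2 y.1, y.2⟩)
      ?_ ?_ ?_ ?_ ?_
    · rintro ⟨R, i⟩ hx
      rw [Finset.mem_sigma] at hx ⊢
      obtain ⟨hR, hi⟩ := hx
      rw [Finset.mem_powersetCard_univ] at hR
      refine ⟨Finset.mem_powersetCard_univ.2 ?_, ?_⟩
      · rw [Finset.card_erase_of_mem hi, hR]; omega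
      · exact Finset.mem_compl.2 (Finset.notMem_erase i R)
    · rintro ⟨S, i⟩ hy
      rw [Finset.mem_sigma] at hy ⊢
      obtain ⟨hS, hi⟩ := hy
      rw [Finset.mem_powersetCard_univ] at hS
      rw [Finset.mem_compl] at hi
      refine ⟨Finset.mem_powersetCard_univ.2 ?_, Finset.mem_insert_self _ _⟩
      rw [Finset.card_insert_of_notMem hi, hS]
    · rintro ⟨R, i⟩ hx
      rw [Finset.mem_sigma] at hx
      simp only [Finset.insert_erase hx.2]
    · rintro ⟨S, i⟩ hy
      rw [Finset.mem_sigma] at hy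
      rw [Finset.mem_compl] at hy
      simp only [Finset.erase_insert hy.2]
    · rintro ⟨R, i⟩ _; rfl
  rw [key, ← Finset.sum_sigma' (Finset.powersetCard j (Finset.univ : Finset (Fin n)))
      (fun S => Sᶜ) (fun S _i => S.fold max 0 w)]
  unfold sumS
  rw [Finset.mul_sum]
  refine Finset.sum_congr rfl fun S hS => ?_
  rw [Finset.mem_powersetCard_univ] at hS
  rw [Finset.sum_const, nsmul_eq_mul, Finset.card_compl, Fintype.card_fin, hS]

lemma key_ineq {n : ℕ} (w : Fin n → ℝ) (hw : ∀ i, 0 ≤ w i) (j : ℕ) :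
    (j : ℝ) * sumS n w (j+1) ≤ ((n - j : ℕ) : ℝ) * sumS n w j := by
  rw [← double_count w j]
  unfold sumS
  rw [Finset.mul_sum]
  refine Finset.sum_le_sum fun R hR => ?_
  rw [Finset.mem_powersetCard_univ] at hR
  have hne : R.Nonempty := Finset.card_pos.1 (by omega)
  have := sum_erase_fold_ge w hw R hne
  rw [hR] at this
  push_cast at this ⊢
  linarith

lemma etaN_step {n : ℕ} (w : Fin n → ℝ) (hw : ∀ i, 0 ≤ w i) (j : ℕ) :
    (j : ℝ) * etaN n w (j+1) ≤ ((j : ℝ) + 1) * etaN n w j := by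
  by_cases hjn : j + 1 ≤ n
  · have hc0 : (0:ℝ) < (n.choose j : ℝ) := by
      exact_mod_cast Nat.choose_pos (by omega)
    have hc1 : (0:ℝ) < (n.choose (j+1) : ℝ) := by
      exact_mod_cast Nat.choose_pos hjn
    unfold etaN
    rw [mul_div_assoc', mul_div_assoc', div_le_div_iff₀ hc1 hc0]
    have hid : (n.choose (j+1) : ℝ) * ((j:ℝ)+1) = (n.choose j : ℝ) * ((n - j : ℕ) : ℝ) := by
      exact_mod_cast congrArg (Nat.cast : ℕ → ℝ) (Nat.choose_succ_right_eq n j)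
    have hk := key_ineq w hw j
    have hS0 := sumS_nonneg n w j
    nlinarith [hk, hS0, hc0.le, hc1.le]
  · have : n.choose (j+1) = 0 := Nat.choose_eq_zero_of_lt (by omega)
    unfold etaN
    rw [this]
    push_cast
    rw [div_zero, mul_zero]
    have := etaN_nonneg n w j
    unfold etaN at this
    positivity

lemma etaN_ratio {n : ℕ} (w : Fin n → ℝ) (hw : ∀ i, 0 ≤ w i) (k m : ℕ)
    (hk : 1 ≤ k) (hkm : k ≤ m) :
    (k : ℝ) * etaN n w m ≤ (m : ℝ) * etaN n w k := by
  induction m, hkm using Nat.le_induction with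
  | base => exact le_refl _
  | succ m hm ih =>
    have hm1 : 1 ≤ m := hk.trans hm
    have hstep := etaN_step w hw m
    have hmpos : (0:ℝ) < (m:ℝ) := by exact_mod_cast hm1
    have hkpos : (0:ℝ) ≤ (k:ℝ) := by positivity
    have h1 : (k:ℝ) * ((m:ℝ) * etaN n w (m+1)) ≤ (k:ℝ) * (((m:ℝ)+1) * etaN n w m) :=
      mul_le_mul_of_nonneg_left hstep hkpos
    have h2 : ((m:ℝ)+1) * ((k:ℝ) * etaN n w m) ≤ ((m:ℝ)+1) * ((m:ℝ) * etaN n w k) :=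
      mul_le_mul_of_nonneg_left ih (by positivity)
    have h3 : (m:ℝ) * ((k:ℝ) * etaN n w (m+1)) ≤ (m:ℝ) * (((m:ℝ)+1) * etaN n w k) := by
      nlinarith [h1, h2]
    have := le_of_mul_le_mul_left (by linarith [h3] : (m:ℝ) * ((k:ℝ) * etaN n w (m+1)) ≤ (m:ℝ) * (((m:ℝ)+1) * etaN n w k)) hmpos
    push_cast
    linarith [this]

lemma eta_eq_etaN (n : ℕ) (w : Fin n → ℝ) (a : ℝ) (ha : 1 ≤ a) :
    (if a < 1 then (0:ℝ) else
      (∑ R ∈ Finset.powersetCard ⌊a⌋.toNat (Finset.univ : Finset (Fin n)),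
          R.fold max 0 w) /
        ((Finset.powersetCard ⌊a⌋.toNat (Finset.univ : Finset (Fin n))).card : ℝ))
      = etaN n w ⌊a⌋.toNat := by
  rw [if_neg (not_lt.2 ha)]
  unfold etaN sumS
  rw [Finset.card_powersetCard, Finset.card_univ, Fintype.card_fin]

theorem statement3' (n : ℕ) (w : Fin n → ℝ) (hw : ∀ i, 0 ≤ w i)
    (a h : ℝ) (ha : 1 ≤ a) (hh1 : 1 ≤ h) (hh2 : h ≤ n / a) :
    (if a * h < 1 then (0:ℝ) else
      (∑ R ∈ Finset.powersetCard ⌊a*h⌋.toNat (Finset.univ : Finset (Fin n)),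
          R.fold max 0 w) /
        ((Finset.powersetCard ⌊a*h⌋.toNat (Finset.univ : Finset (Fin n))).card : ℝ))
    ≤ 2 * a * (if h < 1 then (0:ℝ) else
      (∑ R ∈ Finset.powersetCard ⌊h⌋.toNat (Finset.univ : Finset (Fin n)),
          R.fold max 0 w) /
        ((Finset.powersetCard ⌊h⌋.toNat (Finset.univ : Finset (Fin n))).card : ℝ)) := by
  have hah : 1 ≤ a * h := by nlinarith
  rw [eta_eq_etaN n w (a*h) hah, eta_eq_etaN n w h hh1]
  set m := ⌊a*h⌋.toNat with hm
  set k := ⌊h⌋.toNat with hk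
  have hfk : (1:ℤ) ≤ ⌊h⌋ := by
    rw [Int.le_floor]; exact_mod_cast hh1
  have hfm : (1:ℤ) ≤ ⌊a*h⌋ := by
    rw [Int.le_floor]; exact_mod_cast hah
  have hk1 : 1 ≤ k := by omega
  have hkm : k ≤ m := by
    have : ⌊h⌋ ≤ ⌊a*h⌋ := Int.floor_le_floor (by nlinarith)
    omega
  have hkR : ((k:ℝ)) = (⌊h⌋ : ℝ) := by
    rw [hk]; exact_mod_cast Int.toNat_of_nonneg (by omega)
  have hmR : ((m:ℝ)) = (⌊a*h⌋ : ℝ) := by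
    rw [hm]; exact_mod_cast Int.toNat_of_nonneg (by omega)
  have hmle : (m:ℝ) ≤ a * h := by rw [hmR]; exact Int.floor_le _
  have hhk : h ≤ 2 * (k:ℝ) := by
    by_cases h2 : h < 2
    · have : ⌊h⌋ ≤ 1 := by
        have := Int.floor_le h
        have : (⌊h⌋:ℝ) < 2 := lt_of_le_of_lt (Int.floor_le h) h2
        exact_mod_cast (by exact_mod_cast Int.lt_add_one_iff.1 (by exact_mod_cast this) : ⌊h⌋ ≤ 1)
      have hkeq : k = 1 := by omega
      rw [hkeq]; push_cast; linarith
    · push_neg at h2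
      have h1 : h - 1 < (⌊h⌋:ℝ) := Int.sub_one_lt_floor h
      rw [← hkR] at h1
      linarith
  have hratio := etaN_ratio w hw k m hk1 hkm
  have hetak := etaN_nonneg n w k
  have hmbound : (m:ℝ) ≤ 2 * a * (k:ℝ) := by nlinarith
  have h2 : (m:ℝ) * etaN n w k ≤ 2 * a * (k:ℝ) * etaN n w k :=
    mul_le_mul_of_nonneg_right hmbound hetak
  have hkpos : (0:ℝ) < (k:ℝ) := by exact_mod_cast hk1
  have : (k:ℝ) * etaN n w m ≤ (k:ℝ) * (2 * a * etaN n w k) := by nlinarith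
  nlinarith [le_of_mul_le_mul_left this hkpos]

theorem statement3 (n : ℕ) (w : Fin n → ℝ) (hw : ∀ i, 0 ≤ w i)
    (a h : ℝ) (ha : 1 ≤ a) (hh1 : 1 ≤ h) (hh2 : h ≤ n / a) :
    eta n w (a * h) ≤ 2 * a * eta n w h := by
  unfold eta
  exact statement3' n w hw a h ha hh1 hh2

end
end

section
/- Let X be a binomially distributed random variable with parameters m and p, where 1 ≤ mp ≤ m ≤ n. Then E[η(X)] ≤ 3·η(mp). -/
open scoped BigOperators Classical
open MeasureTheory

noncomputable section

variable {α : Type*} [DecidableEq α]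

namespace Stmt4Aux

def Ssum (n : ℕ) (w : Fin n → ℝ) (j : ℕ) : ℝ :=
  ∑ R ∈ Finset.powersetCard j (Finset.univ : Finset (Fin n)), R.fold max 0 w

def etaN (n : ℕ) (w : Fin n → ℝ) (j : ℕ) : ℝ :=
  Ssum n w j / (n.choose j : ℝ)

variable {n : ℕ} (w : Fin n → ℝ)

lemma fold_nonneg (R : Finset (Fin n)) : 0 ≤ R.fold max 0 w :=
  (Finset.le_fold_max _).mpr (Or.inl le_rfl)

lemma fold_le_of_subset {R T : Finset (Fin n)} (h : R ⊆ T) :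
    R.fold max 0 w ≤ T.fold max 0 w := by
  rw [Finset.fold_max_le]
  exact ⟨fold_nonneg w T, fun x hx => (Finset.le_fold_max _).mpr (Or.inr ⟨x, h hx, le_rfl⟩)⟩

lemma fold_split {R T : Finset (Fin n)} (h : R ⊆ T) :
    T.fold max 0 w ≤ R.fold max 0 w + (T \ R).fold max 0 w := by
  rw [Finset.fold_max_le]
  refine ⟨add_nonneg (fold_nonneg w R) (fold_nonneg w _), fun x hx => ?_⟩
  by_cases hxR : x ∈ R
  · exact le_add_of_le_of_nonneg
      ((Finset.le_fold_max _).mpr (Or.inr ⟨x, hxR, le_rfl⟩)) (fold_nonneg w _)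
  · exact le_add_of_nonneg_of_le (fold_nonneg w _)
      ((Finset.le_fold_max _).mpr (Or.inr ⟨x, Finset.mem_sdiff.mpr ⟨hx, hxR⟩, le_rfl⟩))

lemma Ssum_nonneg (j : ℕ) : 0 ≤ Ssum n w j :=
  Finset.sum_nonneg fun R _ => fold_nonneg w R

lemma etaN_nonneg (j : ℕ) : 0 ≤ etaN n w j :=
  div_nonneg (Ssum_nonneg w j) (by positivity)

lemma card_supsets (R : Finset (Fin n)) (b : ℕ) :
    ((Finset.powersetCard (R.card + b) (Finset.univ : Finset (Fin n))).filter
        (fun T => R ⊆ T)).card = (n - R.card).choose b := by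
  have key : ((Finset.powersetCard (R.card + b) (Finset.univ : Finset (Fin n))).filter
        (fun T => R ⊆ T)).card
      = (Finset.powersetCard b ((Finset.univ : Finset (Fin n)) \ R)).card := by
    apply Finset.card_nbij' (fun T => T \ R) (fun Q => Q ∪ R)
    · intro T hT
      simp only [Finset.mem_coe, Finset.mem_filter, Finset.mem_powersetCard] at hT
      obtain ⟨⟨_, hcard⟩, hRT⟩ := hT
      simp only [Finset.mem_coe, Finset.mem_powersetCard]
      refine ⟨Finset.sdiff_subset_sdiff (Finset.subset_univ T) le_rfl, ?_⟩
      rw [Finset.card_sdiff_of_subset hRT, hcard]; omega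
    · intro Q hQ
      rw [Finset.mem_coe, Finset.mem_powersetCard] at hQ
      obtain ⟨hQsub, hQcard⟩ := hQ
      have hdisj : Disjoint Q R :=
        Finset.disjoint_left.mpr fun x hxQ => (Finset.mem_sdiff.mp (hQsub hxQ)).2
      simp only [Finset.mem_coe, Finset.mem_filter, Finset.mem_powersetCard]
      refine ⟨⟨Finset.subset_univ _, ?_⟩, Finset.subset_union_right⟩
      rw [Finset.card_union_of_disjoint hdisj, hQcard]; omega
    · intro T hT
      simp only [Finset.mem_coe, Finset.mem_filter] at hT
      exact Finset.sdiff_union_of_subset hT.2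
    · intro Q hQ
      rw [Finset.mem_coe, Finset.mem_powersetCard] at hQ
      have hdisj : Disjoint Q R :=
        Finset.disjoint_left.mpr fun x hxQ => (Finset.mem_sdiff.mp (hQ.1 hxQ)).2
      exact Finset.union_sdiff_cancel_right hdisj
  rw [key, Finset.card_powersetCard, Finset.card_sdiff_of_subset (Finset.subset_univ R),
    Finset.card_univ, Fintype.card_fin]

lemma sum_swap (a b : ℕ) (f : Finset (Fin n) → ℝ) :
    ∑ T ∈ Finset.powersetCard (a + b) (Finset.univ : Finset (Fin n)),
        ∑ R ∈ Finset.powersetCard a T, f R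
      = ((n - a).choose b : ℝ) *
          ∑ R ∈ Finset.powersetCard a (Finset.univ : Finset (Fin n)), f R := by
  rw [Finset.sum_comm'
      (s' := fun R => (Finset.powersetCard (a + b) (Finset.univ : Finset (Fin n))).filter
        (fun T => R ⊆ T))
      (t' := Finset.powersetCard a (Finset.univ : Finset (Fin n)))
      (by
        intro T R
        simp only [Finset.mem_powersetCard, Finset.mem_filter]
        constructor
        · rintro ⟨⟨hTu, hTc⟩, hRT, hRc⟩
          exact ⟨⟨⟨hTu, hTc⟩, hRT⟩, Finset.subset_univ R, hRc⟩
        · rintro ⟨⟨⟨hTu, hTc⟩, hRT⟩, _, hRc⟩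
          exact ⟨⟨hTu, hTc⟩, hRT, hRc⟩)]
  rw [Finset.mul_sum]
  refine Finset.sum_congr rfl fun R hR => ?_
  rw [Finset.mem_powersetCard] at hR
  rw [Finset.sum_const, nsmul_eq_mul]
  have h := card_supsets R b
  rw [hR.2] at h
  rw [h]

lemma etaN_le_succ {j : ℕ} (hj : j + 1 ≤ n) : etaN n w j ≤ etaN n w (j + 1) := by
  have key : ((n - j : ℕ) : ℝ) * Ssum n w j ≤ ((j : ℝ) + 1) * Ssum n w (j + 1) := by
    have hs := sum_swap (n := n) j 1 (fun R => R.fold max 0 w)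
    rw [Nat.choose_one_right] at hs
    rw [Ssum, Ssum, ← hs, Finset.mul_sum]
    apply Finset.sum_le_sum
    intro T hT
    rw [Finset.mem_powersetCard] at hT
    calc ∑ R ∈ Finset.powersetCard j T, R.fold max 0 w
        ≤ ∑ _R ∈ Finset.powersetCard j T, T.fold max 0 w :=
          Finset.sum_le_sum fun R hR =>
            fold_le_of_subset w (Finset.mem_powersetCard.mp hR).1
      _ = ((j : ℝ) + 1) * T.fold max 0 w := by
          rw [Finset.sum_const, Finset.card_powersetCard, hT.2,
            Nat.choose_succ_self_right, nsmul_eq_mul]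
          push_cast; ring
  have h1 : 0 < (n.choose j : ℝ) := by
    exact_mod_cast Nat.choose_pos (by omega : j ≤ n)
  have h2 : 0 < (n.choose (j + 1) : ℝ) := by exact_mod_cast Nat.choose_pos hj
  have hid : (n.choose (j + 1) : ℝ) * ((j : ℝ) + 1)
      = (n.choose j : ℝ) * ((n - j : ℕ) : ℝ) := by
    exact_mod_cast congrArg (Nat.cast (R := ℝ)) (Nat.choose_succ_right_eq n j)
  rw [etaN, etaN, div_le_div_iff₀ h1 h2]
  have hjpos : (0 : ℝ) < (j : ℝ) + 1 := by positivity
  have hmul := mul_le_mul_of_nonneg_left key h1.le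
  nlinarith [Ssum_nonneg w j, Ssum_nonneg w (j + 1)]

lemma etaN_mono {j j' : ℕ} (h : j ≤ j') (h' : j' ≤ n) : etaN n w j ≤ etaN n w j' := by
  induction j' with
  | zero => obtain rfl : j = 0 := Nat.le_zero.mp h; exact le_rfl
  | succ k ih =>
    rcases Nat.lt_or_ge j (k + 1) with hlt | hge
    · exact (ih (by omega) (by omega)).trans (etaN_le_succ w h')
    · obtain rfl : j = k + 1 := by omega
      exact le_rfl

lemma sum_compl (T : Finset (Fin n)) {a b : ℕ} (hT : T.card = a + b)
    (f : Finset (Fin n) → ℝ) :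
    ∑ R ∈ Finset.powersetCard a T, f (T \ R) = ∑ Q ∈ Finset.powersetCard b T, f Q := by
  apply Finset.sum_nbij' (fun R => T \ R) (fun Q => T \ Q)
  · intro R hR
    rw [Finset.mem_powersetCard] at hR ⊢
    exact ⟨Finset.sdiff_subset, by rw [Finset.card_sdiff_of_subset hR.1, hT, hR.2]; omega⟩
  · intro Q hQ
    rw [Finset.mem_powersetCard] at hQ ⊢
    exact ⟨Finset.sdiff_subset, by rw [Finset.card_sdiff_of_subset hQ.1, hT, hQ.2]; omega⟩
  · intro R hR
    exact Finset.sdiff_sdiff_eq_self (Finset.mem_powersetCard.mp hR).1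
  · intro Q hQ
    exact Finset.sdiff_sdiff_eq_self (Finset.mem_powersetCard.mp hQ).1
  · intro R _
    rfl

lemma Ssum_subadd (a b : ℕ) :
    (((a + b).choose a : ℕ) : ℝ) * Ssum n w (a + b)
      ≤ ((n - a).choose b : ℝ) * Ssum n w a + ((n - b).choose a : ℝ) * Ssum n w b := by
  have h1 : (((a + b).choose a : ℕ) : ℝ) * Ssum n w (a + b)
      = ∑ T ∈ Finset.powersetCard (a + b) (Finset.univ : Finset (Fin n)),
          ∑ _R ∈ Finset.powersetCard a T, T.fold max 0 w := by
    rw [Ssum, Finset.mul_sum]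
    refine Finset.sum_congr rfl fun T hT => ?_
    rw [Finset.sum_const, Finset.card_powersetCard,
      (Finset.mem_powersetCard.mp hT).2, nsmul_eq_mul]
  rw [h1]
  have h2 : ∑ T ∈ Finset.powersetCard (a + b) (Finset.univ : Finset (Fin n)),
        ∑ _R ∈ Finset.powersetCard a T, T.fold max 0 w
      ≤ ∑ T ∈ Finset.powersetCard (a + b) (Finset.univ : Finset (Fin n)),
          ((∑ R ∈ Finset.powersetCard a T, R.fold max 0 w)
            + ∑ Q ∈ Finset.powersetCard b T, Q.fold max 0 w) := by
    apply Finset.sum_le_sum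
    intro T hT
    have hTc := (Finset.mem_powersetCard.mp hT).2
    calc ∑ _R ∈ Finset.powersetCard a T, T.fold max 0 w
        ≤ ∑ R ∈ Finset.powersetCard a T,
            (R.fold max 0 w + (T \ R).fold max 0 w) :=
          Finset.sum_le_sum fun R hR =>
            fold_split w (Finset.mem_powersetCard.mp hR).1
      _ = (∑ R ∈ Finset.powersetCard a T, R.fold max 0 w)
            + ∑ R ∈ Finset.powersetCard a T, (T \ R).fold max 0 w := by
          rw [Finset.sum_add_distrib]
      _ = _ := by rw [sum_compl T hTc]
  refine h2.trans ?_
  rw [Finset.sum_add_distrib]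
  have h3 := sum_swap (n := n) a b (fun R => R.fold max 0 w)
  have h4 := sum_swap (n := n) b a (fun R => R.fold max 0 w)
  rw [Nat.add_comm b a] at h4
  rw [h3, h4, Ssum, Ssum]

lemma etaN_subadd {a b : ℕ} (hn : a + b ≤ n) :
    etaN n w (a + b) ≤ etaN n w a + etaN n w b := by
  have hd : 0 < (((a + b).choose a : ℕ) : ℝ) := by
    exact_mod_cast Nat.choose_pos (Nat.le_add_right a b)
  have hc : 0 < (n.choose (a + b) : ℝ) := by exact_mod_cast Nat.choose_pos hn
  have hg1 : 0 < (n.choose a : ℝ) := by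
    exact_mod_cast Nat.choose_pos (by omega : a ≤ n)
  have hg2 : 0 < (n.choose b : ℝ) := by
    exact_mod_cast Nat.choose_pos (by omega : b ≤ n)
  have id1 : (n.choose (a + b) : ℝ) * (((a + b).choose a : ℕ) : ℝ)
      = (n.choose a : ℝ) * ((n - a).choose b : ℝ) := by
    have := Nat.choose_mul (n := n) (k := a + b) (s := a) (Nat.le_add_right a b)
    rw [Nat.add_sub_cancel_left] at this
    exact_mod_cast congrArg (Nat.cast (R := ℝ)) this
  have id2 : (n.choose (a + b) : ℝ) * (((a + b).choose a : ℕ) : ℝ)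
      = (n.choose b : ℝ) * ((n - b).choose a : ℝ) := by
    have hsymm : (a + b).choose a = (a + b).choose b := by
      rw [← Nat.choose_symm (Nat.le_add_right a b), Nat.add_sub_cancel_left]
    have := Nat.choose_mul (n := n) (k := a + b) (s := b) (Nat.le_add_left b a)
    rw [Nat.add_sub_cancel] at this
    rw [hsymm]
    exact_mod_cast congrArg (Nat.cast (R := ℝ)) this
  have key := Ssum_subadd w a b
  rw [etaN, etaN, etaN]
  rw [div_add_div _ _ (ne_of_gt hg1) (ne_of_gt hg2), div_le_div_iff₀ hc (by positivity)]
  set x := Ssum n w (a + b)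
  set y := Ssum n w a
  set z := Ssum n w b
  set c := (n.choose (a + b) : ℝ)
  set d := (((a + b).choose a : ℕ) : ℝ)
  set g1 := (n.choose a : ℝ)
  set g2 := (n.choose b : ℝ)
  set e1 := ((n - a).choose b : ℝ)
  set e2 := ((n - b).choose a : ℝ)
  have step : d * (x * (g1 * g2)) ≤ d * ((y * g2 + g1 * z) * c) := by
    calc d * (x * (g1 * g2)) = (d * x) * (g1 * g2) := by ring
      _ ≤ (e1 * y + e2 * z) * (g1 * g2) :=
          mul_le_mul_of_nonneg_right key (by positivity)
      _ = (g1 * e1) * (y * g2) + (g2 * e2) * (z * g1) := by ring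
      _ = (c * d) * (y * g2) + (c * d) * (z * g1) := by rw [← id1, ← id2]
      _ = d * ((y * g2 + g1 * z) * c) := by ring
  exact le_of_mul_le_mul_left step hd
lemma etaN_le_div {k : ℕ} (hk : 1 ≤ k) (hkn : k ≤ n) :
    ∀ j, j ≤ n → etaN n w j ≤ ((j : ℝ) / k + 1) * etaN n w k := by
  intro j
  induction j using Nat.strong_induction_on with
  | _ j ih =>
    intro hjn
    have hk0 : (0 : ℝ) < (k : ℝ) := by exact_mod_cast hk
    rcases le_or_gt j k with hjk | hkj
    · have h1 : etaN n w j ≤ etaN n w k := etaN_mono w hjk hkn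
      have h2 : (1 : ℝ) ≤ (j : ℝ) / k + 1 := le_add_of_nonneg_left (by positivity)
      nlinarith [etaN_nonneg w k]
    · have hsub : j - k + k = j := Nat.sub_add_cancel hkj.le
      have h1 : etaN n w j ≤ etaN n w (j - k) + etaN n w k := by
        have := etaN_subadd w (a := j - k) (b := k) (by omega)
        rwa [hsub] at this
      have h2 := ih (j - k) (by omega) (by omega)
      have hcast : ((j - k : ℕ) : ℝ) = (j : ℝ) - k := by
        push_cast [Nat.cast_sub hkj.le]; ring
      rw [hcast] at h2
      calc etaN n w j ≤ etaN n w (j - k) + etaN n w k := h1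
        _ ≤ (((j : ℝ) - k) / k + 1) * etaN n w k + etaN n w k := by linarith
        _ = ((j : ℝ) / k + 1) * etaN n w k := by field_simp; ring

lemma binom_total (m : ℕ) (p : ℝ) :
    ∑ j ∈ Finset.range (m + 1), (m.choose j : ℝ) * p ^ j * (1 - p) ^ (m - j) = 1 := by
  have h := add_pow p (1 - p) m
  rw [show p + (1 - p) = 1 by ring, one_pow] at h
  calc ∑ j ∈ Finset.range (m + 1), (m.choose j : ℝ) * p ^ j * (1 - p) ^ (m - j)
      = ∑ j ∈ Finset.range (m + 1), p ^ j * (1 - p) ^ (m - j) * (m.choose j : ℝ) :=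
        Finset.sum_congr rfl fun j _ => by ring
    _ = 1 := h.symm

lemma binom_mean {m : ℕ} (hm : 1 ≤ m) (p : ℝ) :
    ∑ j ∈ Finset.range (m + 1),
        (j : ℝ) * ((m.choose j : ℝ) * p ^ j * (1 - p) ^ (m - j)) = m * p := by
  obtain ⟨m', rfl⟩ : ∃ m', m = m' + 1 := ⟨m - 1, by omega⟩
  rw [Finset.sum_range_succ']
  simp only [Nat.cast_zero, zero_mul, add_zero]
  have hterm : ∀ i ∈ Finset.range (m' + 1),
      ((i + 1 : ℕ) : ℝ) * (((m' + 1).choose (i + 1) : ℝ) * p ^ (i + 1)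
          * (1 - p) ^ (m' + 1 - (i + 1)))
        = ((m' + 1 : ℕ) : ℝ) * p
            * ((m'.choose i : ℝ) * p ^ i * (1 - p) ^ (m' - i)) := by
    intro i _
    have hc : (m' + 1) * m'.choose i = (m' + 1).choose (i + 1) * (i + 1) :=
      Nat.add_one_mul_choose_eq m' i
    have hc' : ((m' + 1 : ℕ) : ℝ) * (m'.choose i : ℝ)
        = ((m' + 1).choose (i + 1) : ℝ) * ((i + 1 : ℕ) : ℝ) := by
      exact_mod_cast congrArg (Nat.cast (R := ℝ)) hc
    have hsub : m' + 1 - (i + 1) = m' - i := by omega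
    rw [hsub]
    push_cast at hc' ⊢
    linear_combination (-(p ^ (i + 1) * (1 - p) ^ (m' - i))) * hc'
  calc ∑ i ∈ Finset.range (m' + 1),
        ((i + 1 : ℕ) : ℝ) * (((m' + 1).choose (i + 1) : ℝ) * p ^ (i + 1)
          * (1 - p) ^ (m' + 1 - (i + 1)))
      = ∑ i ∈ Finset.range (m' + 1),
          ((m' + 1 : ℕ) : ℝ) * p * ((m'.choose i : ℝ) * p ^ i * (1 - p) ^ (m' - i)) :=
        Finset.sum_congr rfl hterm
    _ = ((m' + 1 : ℕ) : ℝ) * p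
          * ∑ i ∈ Finset.range (m' + 1), (m'.choose i : ℝ) * p ^ i * (1 - p) ^ (m' - i) := by
        rw [Finset.mul_sum]
    _ = ((m' + 1 : ℕ) : ℝ) * p := by rw [binom_total m' p, mul_one]
end Stmt4Aux

lemma eta_natCast {n : ℕ} (w : Fin n → ℝ) (j : ℕ) :
    eta n w (j : ℝ) = Stmt4Aux.etaN n w j := by
  rcases Nat.eq_zero_or_pos j with rfl | hj
  · rw [eta, if_pos (by norm_num)]
    simp [Stmt4Aux.etaN, Stmt4Aux.Ssum, Finset.powersetCard_zero]
  · rw [eta, if_neg (not_lt.mpr (by exact_mod_cast hj : (1:ℝ) ≤ (j:ℝ)))]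
    rw [Stmt4Aux.etaN, Stmt4Aux.Ssum, Finset.card_powersetCard, Finset.card_univ,
      Fintype.card_fin]
    norm_num

lemma eta_ge_one {n : ℕ} (w : Fin n → ℝ) (x : ℝ) (hx : 1 ≤ x) :
    eta n w x = Stmt4Aux.etaN n w ⌊x⌋.toNat := by
  rw [eta, if_neg (not_lt.mpr hx), Stmt4Aux.etaN, Stmt4Aux.Ssum,
    Finset.card_powersetCard, Finset.card_univ, Fintype.card_fin]


theorem statement4 (n : ℕ) (w : Fin n → ℝ) (hw : ∀ i, 0 ≤ w i)
    (m : ℕ) (p : ℝ) (hp0 : 0 ≤ p) (hp1 : p ≤ 1)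
    (hmp : 1 ≤ m * p) (hmn : m ≤ n) :
    ∑ j ∈ Finset.range (m + 1),
        (m.choose j : ℝ) * p ^ j * (1 - p) ^ (m - j) * eta n w j ≤
      3 * eta n w (m * p) := by
  have hq : (0:ℝ) ≤ 1 - p := by linarith
  have hm1 : 1 ≤ m := by
    rcases Nat.eq_zero_or_pos m with rfl | h
    · exfalso; norm_num at hmp
    · exact h
  set k : ℕ := ⌊(m : ℝ) * p⌋.toNat with hkdef
  have hfl0 : (0:ℤ) ≤ ⌊(m : ℝ) * p⌋ := Int.le_floor.mpr (by
    have : (0:ℝ) ≤ (m:ℝ) * p := by linarith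
    exact_mod_cast this)
  have hkZ : (k : ℤ) = ⌊(m : ℝ) * p⌋ := Int.toNat_of_nonneg hfl0
  have hk1 : 1 ≤ k := by
    have h1 : (1:ℤ) ≤ ⌊(m : ℝ) * p⌋ := Int.le_floor.mpr (by exact_mod_cast hmp)
    omega
  have hkr : (k : ℝ) ≤ (m : ℝ) * p := by
    have h1 := Int.floor_le ((m:ℝ) * p)
    rw [← hkZ] at h1
    exact_mod_cast h1
  have hku : (m : ℝ) * p ≤ (k : ℝ) + 1 := by
    have h1 := (Int.lt_floor_add_one ((m:ℝ) * p)).le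
    rw [← hkZ] at h1
    exact_mod_cast h1
  have hmpm : (m : ℝ) * p ≤ (m : ℝ) := by
    nlinarith [Nat.cast_nonneg (α := ℝ) m]
  have hkm : k ≤ m := by exact_mod_cast hkr.trans hmpm
  have hkn : k ≤ n := hkm.trans hmn
  have hEmp : eta n w ((m:ℝ) * p) = Stmt4Aux.etaN n w k := eta_ge_one w _ hmp
  have hBin : ∀ j, 0 ≤ (m.choose j : ℝ) * p ^ j * (1 - p) ^ (m - j) := fun j =>
    mul_nonneg (mul_nonneg (Nat.cast_nonneg _) (pow_nonneg hp0 _)) (pow_nonneg hq _)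
  have hE : 0 ≤ Stmt4Aux.etaN n w k := Stmt4Aux.etaN_nonneg w k
  have hk0 : (0:ℝ) < (k:ℝ) := by exact_mod_cast hk1
  rw [hEmp]
  calc ∑ j ∈ Finset.range (m + 1),
        (m.choose j : ℝ) * p ^ j * (1 - p) ^ (m - j) * eta n w j
      = ∑ j ∈ Finset.range (m + 1),
          (m.choose j : ℝ) * p ^ j * (1 - p) ^ (m - j) * Stmt4Aux.etaN n w j :=
        Finset.sum_congr rfl fun j _ => by rw [eta_natCast]
    _ ≤ ∑ j ∈ Finset.range (m + 1),
          (m.choose j : ℝ) * p ^ j * (1 - p) ^ (m - j)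
            * (((j:ℝ) / k + 1) * Stmt4Aux.etaN n w k) := by
        apply Finset.sum_le_sum
        intro j hj
        refine mul_le_mul_of_nonneg_left ?_ (hBin j)
        refine Stmt4Aux.etaN_le_div w hk1 hkn j ?_
        have := Finset.mem_range.mp hj
        omega
    _ = (Stmt4Aux.etaN n w k / k)
            * ∑ j ∈ Finset.range (m + 1),
                (j:ℝ) * ((m.choose j : ℝ) * p ^ j * (1 - p) ^ (m - j))
          + Stmt4Aux.etaN n w k
            * ∑ j ∈ Finset.range (m + 1),
                (m.choose j : ℝ) * p ^ j * (1 - p) ^ (m - j) := by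
        rw [Finset.mul_sum, Finset.mul_sum, ← Finset.sum_add_distrib]
        exact Finset.sum_congr rfl fun j _ => by ring
    _ = (Stmt4Aux.etaN n w k / k) * ((m:ℝ) * p) + Stmt4Aux.etaN n w k * 1 := by
        rw [Stmt4Aux.binom_mean hm1 p, Stmt4Aux.binom_total m p]
    _ ≤ 3 * Stmt4Aux.etaN n w k := by
        have hck : (1:ℝ) ≤ (k:ℝ) := by exact_mod_cast hk1
        have h2k : (m:ℝ) * p ≤ 2 * k := by linarith
        have hstep : (Stmt4Aux.etaN n w k / k) * ((m:ℝ) * p)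
            ≤ (Stmt4Aux.etaN n w k / k) * (2 * k) :=
          mul_le_mul_of_nonneg_left h2k (by positivity)
        have heq : (Stmt4Aux.etaN n w k / k) * (2 * k) = 2 * Stmt4Aux.etaN n w k := by
          field_simp
        linarith

end
end

section
/- Let M = (N, I) be a finite matroid that contains 3h pairwise disjoint bases for some integer h ≥ 1, and let S ⊆ N be a random subset containing each element of N independently with probability 1/2. Then Pr[ |span(D_M(S, h)) ∖ S| ≤ |N|/12 ] ≤ exp(−|N|/144). -/
open scoped BigOperators Classical
open MeasureTheory

noncomputable section

variable {α : Type*} [DecidableEq α]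

namespace FinMatroid

variable {M : FinMatroid α}

lemma r_insert_le (M : FinMatroid α) (A : Finset α) (e : α) :
    M.r (insert e A) ≤ M.r A + 1 := by
  have h := M.rank_submod A {e}
  have h1 : A ∪ {e} = insert e A := by
    ext x; simp [or_comm]
  rw [h1] at h
  have h2 := M.rank_le_card {e}
  simp only [Finset.card_singleton] at h2
  omega

lemma mem_span {A : Finset α} {e : α} :
    e ∈ M.span A ↔ e ∈ M.E ∧ M.r (insert e A) = M.r A := by
  simp [FinMatroid.span]

lemma span_mono {A B : Finset α} (hAB : A ⊆ B) : M.span A ⊆ M.span B := by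
  intro e he
  rw [mem_span] at he ⊢
  refine ⟨he.1, le_antisymm ?_ (M.rank_mono (Finset.subset_insert _ _))⟩
  have hsub := M.rank_submod (insert e A) B
  have hu : insert e A ∪ B = insert e B := by
    ext x
    simp only [Finset.mem_union, Finset.mem_insert]
    constructor
    · rintro (h | h)
      · rcases h with h | h
        · exact Or.inl h
        · exact Or.inr (hAB h)
      · exact Or.inr h
    · rintro (h | h)
      · exact Or.inl (Or.inl h)
      · exact Or.inr h
  have hi : A ⊆ insert e A ∩ B := Finset.subset_inter (Finset.subset_insert _ _) hAB
  have hmono := M.rank_mono hi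
  rw [hu, he.2] at hsub
  omega

/-- `U` is an inclusion-maximal-candidate maximizer of `|V| - lam * r V` over subsets of `S`. -/
def MaxDense (M : FinMatroid α) (S : Finset α) (lam : ℝ) (U : Finset α) : Prop :=
  U ⊆ S ∧ ∀ V ⊆ S, (V.card : ℝ) - lam * M.r V ≤ (U.card : ℝ) - lam * M.r U

lemma supermod (M : FinMatroid α) {lam : ℝ} (hlam : 0 ≤ lam) (U V : Finset α) :
    ((U.card : ℝ) - lam * M.r U) + ((V.card : ℝ) - lam * M.r V) ≤
      (((U ∪ V).card : ℝ) - lam * M.r (U ∪ V)) +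
        (((U ∩ V).card : ℝ) - lam * M.r (U ∩ V)) := by
  have hc : (U ∪ V).card + (U ∩ V).card = U.card + V.card :=
    Finset.card_union_add_card_inter U V
  have hr := M.rank_submod U V
  have hr' : lam * M.r (U ∪ V) + lam * M.r (U ∩ V) ≤ lam * M.r U + lam * M.r V := by
    rw [← mul_add, ← mul_add]
    exact mul_le_mul_of_nonneg_left (by exact_mod_cast hr) hlam
  have hc' : ((U ∪ V).card : ℝ) + ((U ∩ V).card : ℝ) = (U.card : ℝ) + V.card := by
    exact_mod_cast hc
  linarith

lemma MaxDense.union {S S' U V : Finset α} {lam : ℝ} (hlam : 0 ≤ lam)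
    (hU : M.MaxDense S lam U) (hV : M.MaxDense S' lam V) (hSS' : S ⊆ S') :
    M.MaxDense S' lam (U ∪ V) := by
  have h1 := M.supermod hlam U V
  have h2 : ((U ∩ V).card : ℝ) - lam * M.r (U ∩ V) ≤ (U.card : ℝ) - lam * M.r U :=
    hU.2 _ (Finset.inter_subset_left.trans hU.1)
  refine ⟨Finset.union_subset (hU.1.trans hSS') hV.1, fun W hW => ?_⟩
  have h3 := hV.2 W hW
  linarith

lemma subset_D {S U : Finset α} {lam : ℝ} (h : M.MaxDense S lam U) : U ⊆ M.D S lam := by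
  have hmem : U ∈ S.powerset.filter fun U =>
      ∀ V ∈ S.powerset, (V.card : ℝ) - lam * M.r V ≤ (U.card : ℝ) - lam * M.r U := by
    refine Finset.mem_filter.2 ⟨Finset.mem_powerset.2 h.1, fun V hV => h.2 V (Finset.mem_powerset.1 hV)⟩
  exact Finset.le_sup (f := id) hmem

lemma maxDense_D (M : FinMatroid α) (S : Finset α) {lam : ℝ} (hlam : 0 ≤ lam) :
    M.MaxDense S lam (M.D S lam) := by
  obtain ⟨U₀, hU₀mem, hU₀⟩ := Finset.exists_max_image S.powerset
    (fun U => (U.card : ℝ) - lam * M.r U) ⟨∅, Finset.empty_mem_powerset S⟩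
  have hU₀max : M.MaxDense S lam U₀ :=
    ⟨Finset.mem_powerset.1 hU₀mem, fun V hV => hU₀ V (Finset.mem_powerset.2 hV)⟩
  have key : M.MaxDense S lam (M.D S lam) ∨ M.D S lam = ∅ := by
    apply Finset.sup_induction (p := fun X => M.MaxDense S lam X ∨ X = ∅)
    · exact Or.inr rfl
    · rintro a (ha | ha) b (hb | hb)
      · exact Or.inl (by simpa using ha.union hlam hb (Finset.Subset.refl S))
      · subst hb; simp only [Finset.sup_eq_union, Finset.union_empty]; exact Or.inl ha
      · subst ha; simp only [Finset.sup_eq_union, Finset.empty_union]; exact Or.inl hb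
      · subst ha; subst hb; exact Or.inr (by simp)
    · intro U hU
      have h' := Finset.mem_filter.1 hU
      exact Or.inl ⟨Finset.mem_powerset.1 h'.1, fun V hV => h'.2 V (Finset.mem_powerset.2 hV)⟩
  rcases key with h | h
  · exact h
  · have hU0 : U₀ = ∅ := Finset.subset_empty.mp (h ▸ subset_D hU₀max)
    rw [h, ← hU0]
    exact hU₀max

lemma D_mono {S S' : Finset α} {lam : ℝ} (hlam : 0 ≤ lam) (hSS' : S ⊆ S') :
    M.D S lam ⊆ M.D S' lam := by
  have h := (M.maxDense_D S hlam).union hlam (M.maxDense_D S' hlam) hSS'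
  exact Finset.subset_union_left.trans (subset_D h)

end FinMatroid
namespace FinMatroid

lemma sparse_insert {M : FinMatroid α} {h : ℕ} (hh : 1 ≤ h) {Wacc R : Finset α} {e : α}
    (hWR : Wacc ⊆ R) (hG : ∀ U ⊆ Wacc, U.card ≤ h * M.r U) (heE : e ∈ M.E)
    (he : e ∉ M.span (M.D R (h : ℝ))) :
    ∀ U ⊆ insert e Wacc, U.card ≤ h * M.r U := by
  by_cases heW : e ∈ Wacc
  · rwa [Finset.insert_eq_self.2 heW]
  intro U hU
  by_cases heU : e ∈ U
  · set V := U.erase e with hVdef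
    have hVW : V ⊆ Wacc := by
      intro x hx
      rcases Finset.mem_insert.1 (hU (Finset.mem_of_mem_erase hx)) with h' | h'
      · subst h'; exact absurd hx (Finset.notMem_erase _ _)
      · exact h'
    have hUV : U = insert e V := (Finset.insert_erase heU).symm
    have heV : e ∉ V := Finset.notMem_erase e U
    have hcard : U.card = V.card + 1 := by rw [hUV, Finset.card_insert_of_notMem heV]
    have hrle : M.r U ≤ M.r V + 1 := by rw [hUV]; exact M.r_insert_le V e
    have hrge : M.r V ≤ M.r U := M.rank_mono (hUV ▸ Finset.subset_insert e V)
    rcases Nat.lt_or_ge (M.r U) (M.r V + 1) with hcase | hcase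
    · -- r U = r V
      have hrEq : M.r U = M.r V := le_antisymm (by omega) hrge
      have hVcard : V.card < h * M.r V := by
        rcases Nat.lt_or_ge V.card (h * M.r V) with h' | h'
        · exact h'
        have hEq : V.card = h * M.r V := le_antisymm (hG V hVW) h'
        exfalso
        have hmax : M.MaxDense Wacc (h : ℝ) V := by
          refine ⟨hVW, fun W' hW' => ?_⟩
          have h1 := hG W' hW'
          have h2 : ((V.card : ℝ)) = (h : ℝ) * M.r V := by exact_mod_cast hEq
          have h3 : ((W'.card : ℝ)) ≤ (h : ℝ) * M.r W' := by exact_mod_cast h1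
          linarith
        have hVD : V ⊆ M.D Wacc (h : ℝ) := subset_D hmax
        have heSpanV : e ∈ M.span V := mem_span.2 ⟨heE, by rw [← hUV, hrEq]⟩
        have h6 : M.D Wacc (h : ℝ) ⊆ M.D R (h : ℝ) := D_mono (Nat.cast_nonneg h) hWR
        exact he (span_mono h6 (span_mono hVD heSpanV))
      have := hG V hVW
      calc U.card = V.card + 1 := hcard
        _ ≤ h * M.r V := hVcard
        _ = h * M.r U := by rw [hrEq]
    · -- r U = r V + 1
      have hrEq : M.r U = M.r V + 1 := le_antisymm hrle hcase
      have h1 := hG V hVW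
      have : U.card ≤ h * M.r V + 1 := by omega
      calc U.card ≤ h * M.r V + 1 := this
        _ ≤ h * M.r V + h := by omega
        _ = h * (M.r V + 1) := by ring
        _ = h * M.r U := by rw [hrEq]
  · refine hG U fun x hx => ?_
    rcases Finset.mem_insert.1 (hU hx) with h' | h'
    · subst h'; exact absurd hx heU
    · exact h'

/-- The adaptive reveal process. Returns (stuck-in-sample elements, span-out-of-sample elements). -/
noncomputable def proc (M : FinMatroid α) (lam : ℝ) (S : Finset α) (Rm R : Finset α) :
    Finset α × Finset α :=
  if hRm : Rm.Nonempty then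
    if hP : (M.span (M.D R lam) ∩ Rm).Nonempty then
      let e := hP.choose
      let rest := M.proc lam S (Rm.erase e) (if e ∈ S then insert e R else R)
      (rest.1, if e ∈ S then rest.2 else insert e rest.2)
    else
      let e := hRm.choose
      let rest := M.proc lam S (Rm.erase e) (if e ∈ S then insert e R else R)
      (if e ∈ S then insert e rest.1 else rest.1, rest.2)
  else (∅, ∅)
termination_by Rm.card
decreasing_by
  · exact Finset.card_erase_lt_of_mem (Finset.mem_of_mem_inter_right hP.choose_spec)
  · exact Finset.card_erase_lt_of_mem hRm.choose_spec

end FinMatroid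
namespace FinMatroid

variable {M : FinMatroid α} {lam : ℝ}

lemma proc_subset (S : Finset α) : ∀ (Rm R : Finset α),
    (M.proc lam S Rm R).1 ⊆ Rm ∧ (M.proc lam S Rm R).2 ⊆ Rm := by
  intro Rm
  induction Rm using Finset.strongInduction with
  | _ Rm ih =>
    intro R
    rw [proc]
    by_cases hRm : Rm.Nonempty
    · rw [dif_pos hRm]
      by_cases hP : (M.span (M.D R lam) ∩ Rm).Nonempty
      · rw [dif_pos hP]
        dsimp only
        have heRm : hP.choose ∈ Rm := Finset.mem_of_mem_inter_right hP.choose_spec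
        have hsub : Rm.erase hP.choose ⊂ Rm := Finset.erase_ssubset heRm
        by_cases heS : hP.choose ∈ S
        · simp only [if_pos heS]
          have ihr := ih _ hsub (insert hP.choose R)
          exact ⟨ihr.1.trans (Finset.erase_subset _ _), ihr.2.trans (Finset.erase_subset _ _)⟩
        · simp only [if_neg heS]
          have ihr := ih _ hsub R
          exact ⟨ihr.1.trans (Finset.erase_subset _ _),
            Finset.insert_subset heRm (ihr.2.trans (Finset.erase_subset _ _))⟩
      · rw [dif_neg hP]
        dsimp only
        have heRm : hRm.choose ∈ Rm := hRm.choose_spec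
        have hsub : Rm.erase hRm.choose ⊂ Rm := Finset.erase_ssubset heRm
        by_cases heS : hRm.choose ∈ S
        · simp only [if_pos heS]
          have ihr := ih _ hsub (insert hRm.choose R)
          exact ⟨Finset.insert_subset heRm (ihr.1.trans (Finset.erase_subset _ _)),
            ihr.2.trans (Finset.erase_subset _ _)⟩
        · simp only [if_neg heS]
          have ihr := ih _ hsub R
          exact ⟨ihr.1.trans (Finset.erase_subset _ _), ihr.2.trans (Finset.erase_subset _ _)⟩
    · rw [dif_neg hRm]
      simp

lemma proc_congr : ∀ (Rm R : Finset α) {S S' : Finset α},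
    (∀ x ∈ Rm, (x ∈ S ↔ x ∈ S')) → M.proc lam S Rm R = M.proc lam S' Rm R := by
  intro Rm
  induction Rm using Finset.strongInduction with
  | _ Rm ih =>
    intro R S S' hag
    rw [proc, proc]
    by_cases hRm : Rm.Nonempty
    · rw [dif_pos hRm, dif_pos hRm]
      by_cases hP : (M.span (M.D R lam) ∩ Rm).Nonempty
      · rw [dif_pos hP, dif_pos hP]
        dsimp only
        have heRm : hP.choose ∈ Rm := Finset.mem_of_mem_inter_right hP.choose_spec
        have hsub : Rm.erase hP.choose ⊂ Rm := Finset.erase_ssubset heRm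
        have hag' : ∀ x ∈ Rm.erase hP.choose, (x ∈ S ↔ x ∈ S') := fun x hx =>
          hag x (Finset.mem_of_mem_erase hx)
        by_cases heS : hP.choose ∈ S
        · have heS' : hP.choose ∈ S' := (hag _ heRm).1 heS
          simp only [if_pos heS, if_pos heS', ih _ hsub _ hag']
        · have heS' : hP.choose ∉ S' := fun h => heS ((hag _ heRm).2 h)
          simp only [if_neg heS, if_neg heS', ih _ hsub _ hag']
      · rw [dif_neg hP, dif_neg hP]
        dsimp only
        have heRm : hRm.choose ∈ Rm := hRm.choose_spec
        have hsub : Rm.erase hRm.choose ⊂ Rm := Finset.erase_ssubset heRm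
        have hag' : ∀ x ∈ Rm.erase hRm.choose, (x ∈ S ↔ x ∈ S') := fun x hx =>
          hag x (Finset.mem_of_mem_erase hx)
        by_cases heS : hRm.choose ∈ S
        · have heS' : hRm.choose ∈ S' := (hag _ heRm).1 heS
          simp only [if_pos heS, if_pos heS', ih _ hsub _ hag']
        · have heS' : hRm.choose ∉ S' := fun h => heS ((hag _ heRm).2 h)
          simp only [if_neg heS, if_neg heS', ih _ hsub _ hag']
    · rw [dif_neg hRm, dif_neg hRm]

end FinMatroid
namespace FinMatroid

variable {M : FinMatroid α}

lemma proc_snd_spec {lam : ℝ} (hlam : 0 ≤ lam) (S : Finset α) : ∀ (Rm R : Finset α),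
    R ⊆ S → (M.proc lam S Rm R).2 ⊆ M.span (M.D S lam) \ S := by
  intro Rm
  induction Rm using Finset.strongInduction with
  | _ Rm ih =>
    intro R hRS
    rw [proc]
    by_cases hRm : Rm.Nonempty
    · rw [dif_pos hRm]
      by_cases hP : (M.span (M.D R lam) ∩ Rm).Nonempty
      · rw [dif_pos hP]
        dsimp only
        have heRm : hP.choose ∈ Rm := Finset.mem_of_mem_inter_right hP.choose_spec
        have heSpan : hP.choose ∈ M.span (M.D R lam) :=
          Finset.mem_of_mem_inter_left hP.choose_spec
        have hsub : Rm.erase hP.choose ⊂ Rm := Finset.erase_ssubset heRm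
        by_cases heS : hP.choose ∈ S
        · simp only [if_pos heS]
          exact ih _ hsub _ (Finset.insert_subset heS hRS)
        · simp only [if_neg heS]
          refine Finset.insert_subset ?_ (ih _ hsub _ hRS)
          refine Finset.mem_sdiff.2 ⟨?_, heS⟩
          exact span_mono (D_mono hlam hRS) heSpan
      · rw [dif_neg hP]
        dsimp only
        have heRm : hRm.choose ∈ Rm := hRm.choose_spec
        have hsub : Rm.erase hRm.choose ⊂ Rm := Finset.erase_ssubset heRm
        by_cases heS : hRm.choose ∈ S
        · simp only [if_pos heS]
          exact ih _ hsub _ (Finset.insert_subset heS hRS)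
        · simp only [if_neg heS]
          exact ih _ hsub _ hRS
    · rw [dif_neg hRm]
      simp

lemma proc_fst_sparse {h : ℕ} (hh : 1 ≤ h) (S : Finset α) : ∀ (Rm R Wacc : Finset α),
    Rm ⊆ M.E → R ⊆ S → Wacc ⊆ R → (∀ U ⊆ Wacc, U.card ≤ h * M.r U) →
    ∀ U ⊆ Wacc ∪ (M.proc (h : ℝ) S Rm R).1, U.card ≤ h * M.r U := by
  intro Rm
  induction Rm using Finset.strongInduction with
  | _ Rm ih =>
    intro R Wacc hRmE hRS hWR hG
    rw [proc]
    by_cases hRm : Rm.Nonempty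
    · rw [dif_pos hRm]
      by_cases hP : (M.span (M.D R (h : ℝ)) ∩ Rm).Nonempty
      · rw [dif_pos hP]
        dsimp only
        have heRm : hP.choose ∈ Rm := Finset.mem_of_mem_inter_right hP.choose_spec
        have hsub : Rm.erase hP.choose ⊂ Rm := Finset.erase_ssubset heRm
        have hRmE' : Rm.erase hP.choose ⊆ M.E := (Finset.erase_subset _ _).trans hRmE
        by_cases heS : hP.choose ∈ S
        · simp only [if_pos heS]
          exact ih _ hsub _ Wacc hRmE' (Finset.insert_subset heS hRS)
            (hWR.trans (Finset.subset_insert _ _)) hG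
        · simp only [if_neg heS]
          exact ih _ hsub _ Wacc hRmE' hRS hWR hG
      · rw [dif_neg hP]
        dsimp only
        have heRm : hRm.choose ∈ Rm := hRm.choose_spec
        have hsub : Rm.erase hRm.choose ⊂ Rm := Finset.erase_ssubset heRm
        have hRmE' : Rm.erase hRm.choose ⊆ M.E := (Finset.erase_subset _ _).trans hRmE
        have heSpan : hRm.choose ∉ M.span (M.D R (h : ℝ)) := by
          intro hmem
          exact hP ⟨hRm.choose, Finset.mem_inter.2 ⟨hmem, heRm⟩⟩
        by_cases heS : hRm.choose ∈ S
        · simp only [if_pos heS]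
          have hG' : ∀ U ⊆ insert hRm.choose Wacc, U.card ≤ h * M.r U :=
            sparse_insert hh hWR hG (hRmE heRm) heSpan
          have hres := ih _ hsub (insert hRm.choose R) (insert hRm.choose Wacc) hRmE'
            (Finset.insert_subset heS hRS) (Finset.insert_subset_insert _ hWR) hG'
          intro U hU
          refine hres U (hU.trans ?_)
          intro x hx
          rcases Finset.mem_union.1 hx with hx | hx
          · exact Finset.mem_union_left _ (Finset.mem_insert_of_mem hx)
          · rcases Finset.mem_insert.1 hx with hx | hx
            · exact Finset.mem_union_left _ (hx ▸ Finset.mem_insert_self _ _)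
            · exact Finset.mem_union_right _ hx
        · simp only [if_neg heS]
          exact ih _ hsub _ Wacc hRmE' hRS hWR hG
    · rw [dif_neg hRm]
      simpa using hG

end FinMatroid
namespace FinMatroid

variable {M : FinMatroid α}

lemma pascal_sum (m K : ℕ) :
    ∑ j ∈ Finset.range (K + 1), (m + 1).choose j =
      ∑ j ∈ Finset.range (K + 1), m.choose j + ∑ j ∈ Finset.range K, m.choose j := by
  rw [Finset.sum_range_succ' (fun j => (m + 1).choose j) K]
  rw [Finset.sum_range_succ' (fun j => m.choose j) K]
  simp only [Nat.choose_succ_succ, Nat.choose_zero_right]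
  rw [Finset.sum_add_distrib]
  simp only [Nat.succ_eq_add_one]
  omega

lemma count_combine {u s : Finset α} {e : α} (he : e ∉ s) (hu : u = insert e s)
    {g g0 g1 : Finset α → ℕ} {a0 a1 : ℕ} (ha : a0 + a1 = 1)
    (h0 : ∀ T ∈ s.powerset, g T = g0 T + a0)
    (h1 : ∀ T ∈ s.powerset, g (insert e T) = g1 T + a1)
    (IH0 : ∀ k, ((s.powerset.filter fun T => g0 T ≤ k).card ≤
        ∑ j ∈ Finset.range (k + 1), s.card.choose j))
    (IH1 : ∀ k, ((s.powerset.filter fun T => g1 T ≤ k).card ≤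
        ∑ j ∈ Finset.range (k + 1), s.card.choose j))
    (k : ℕ) :
    (u.powerset.filter fun T => g T ≤ k).card ≤
      ∑ j ∈ Finset.range (k + 1), u.card.choose j := by
  subst hu
  rw [Finset.card_insert_of_notMem he]
  rw [Finset.card_filter, Finset.sum_powerset_insert he]
  have e0 : ∀ T ∈ s.powerset, (if g T ≤ k then 1 else 0) = (if g0 T + a0 ≤ k then 1 else 0) := by
    intro T hT; rw [h0 T hT]
  have e1 : ∀ T ∈ s.powerset,
      (if g (insert e T) ≤ k then 1 else 0) = (if g1 T + a1 ≤ k then 1 else 0) := by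
    intro T hT; rw [h1 T hT]
  rw [Finset.sum_congr rfl e0, Finset.sum_congr rfl e1, ← Finset.card_filter, ← Finset.card_filter]
  have key : ∀ (gg : Finset α → ℕ) (a : ℕ), a ≤ 1 →
      (∀ k', ((s.powerset.filter fun T => gg T ≤ k').card ≤
        ∑ j ∈ Finset.range (k' + 1), s.card.choose j)) →
      ((s.powerset.filter fun T => gg T + a ≤ k).card ≤
        ∑ j ∈ Finset.range (k + 1 - a), s.card.choose j) := by
    intro gg a ha1 hgg
    rcases Nat.le_one_iff_eq_zero_or_eq_one.1 ha1 with rfl | rfl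
    · simpa using hgg k
    · cases k with
      | zero =>
        rw [Finset.filter_false_of_mem (fun T _ => by omega)]
        simp
      | succ k' =>
        have hiff : ∀ T, (gg T + 1 ≤ k' + 1) = (gg T ≤ k') := by
          intro T; simp only [eq_iff_iff]; omega
        simp only [hiff]
        simpa using hgg k'
  have b0 := key g0 a0 (by omega) IH0
  have b1 := key g1 a1 (by omega) IH1
  have hcase : (a0 = 0 ∧ a1 = 1) ∨ (a0 = 1 ∧ a1 = 0) := by omega
  rcases hcase with ⟨rfl, rfl⟩ | ⟨rfl, rfl⟩
  · rw [pascal_sum]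
    simp only [Nat.add_sub_cancel] at b0 b1 ⊢
    simp only [Nat.sub_zero] at b0
    omega
  · rw [pascal_sum]
    simp only [Nat.add_sub_cancel] at b0 b1 ⊢
    simp only [Nat.sub_zero] at b1
    omega

end FinMatroid
namespace FinMatroid

variable {M : FinMatroid α}

lemma proc_count {lam : ℝ} : ∀ (Rm R : Finset α) (k : ℕ),
    (Rm.powerset.filter fun T =>
        (M.proc lam T Rm R).1.card + (M.proc lam T Rm R).2.card ≤ k).card ≤
      ∑ j ∈ Finset.range (k + 1), Rm.card.choose j := by
  intro Rm
  induction Rm using Finset.strongInduction with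
  | _ Rm ih =>
    intro R k
    by_cases hRm : Rm.Nonempty
    · by_cases hP : (M.span (M.D R lam) ∩ Rm).Nonempty
      · -- span-type step, element e := hP.choose
        set e := hP.choose with hedef
        have heRm : e ∈ Rm := Finset.mem_of_mem_inter_right hP.choose_spec
        have hsub : Rm.erase e ⊂ Rm := Finset.erase_ssubset heRm
        have he : e ∉ Rm.erase e := Finset.notMem_erase e Rm
        refine count_combine he (Finset.insert_erase heRm).symm (a0 := 1) (a1 := 0) rfl
          (g0 := fun T => (M.proc lam T (Rm.erase e) R).1.card +
            (M.proc lam T (Rm.erase e) R).2.card)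
          (g1 := fun T => (M.proc lam T (Rm.erase e) (insert e R)).1.card +
            (M.proc lam T (Rm.erase e) (insert e R)).2.card)
          ?_ ?_ (fun k' => ih _ hsub R k') (fun k' => ih _ hsub (insert e R) k') k
        · intro T hT
          have heT : e ∉ T := fun h => he (Finset.mem_powerset.1 hT h)
          rw [proc, dif_pos hRm, dif_pos hP]
          dsimp only
          rw [if_neg heT, if_neg heT]
          have hnotmem : e ∉ (M.proc lam T (Rm.erase e) R).2 :=
            fun h => he ((proc_subset T (Rm.erase e) R).2 h)
          rw [Finset.card_insert_of_notMem hnotmem]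
          simp only [← hedef]
          omega
        · intro T hT
          have heT : e ∉ T := fun h => he (Finset.mem_powerset.1 hT h)
          have heT' : e ∈ insert e T := Finset.mem_insert_self e T
          rw [proc, dif_pos hRm, dif_pos hP]
          dsimp only
          rw [if_pos heT', if_pos heT']
          have hcongr : M.proc lam (insert e T) (Rm.erase e) (insert e R) =
              M.proc lam T (Rm.erase e) (insert e R) := by
            apply proc_congr
            intro x hx
            have hxe : x ≠ e := Finset.ne_of_mem_erase hx
            simp [Finset.mem_insert, hxe]
          rw [hcongr]
          omega
      · -- stuck-type step, element e := hRm.choose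
        set e := hRm.choose with hedef
        have heRm : e ∈ Rm := hRm.choose_spec
        have hsub : Rm.erase e ⊂ Rm := Finset.erase_ssubset heRm
        have he : e ∉ Rm.erase e := Finset.notMem_erase e Rm
        refine count_combine he (Finset.insert_erase heRm).symm (a0 := 0) (a1 := 1) rfl
          (g0 := fun T => (M.proc lam T (Rm.erase e) R).1.card +
            (M.proc lam T (Rm.erase e) R).2.card)
          (g1 := fun T => (M.proc lam T (Rm.erase e) (insert e R)).1.card +
            (M.proc lam T (Rm.erase e) (insert e R)).2.card)
          ?_ ?_ (fun k' => ih _ hsub R k') (fun k' => ih _ hsub (insert e R) k') k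
        · intro T hT
          have heT : e ∉ T := fun h => he (Finset.mem_powerset.1 hT h)
          rw [proc, dif_pos hRm, dif_neg hP]
          dsimp only
          rw [if_neg heT, if_neg heT]
          simp only [← hedef]
          omega
        · intro T hT
          have heT : e ∉ T := fun h => he (Finset.mem_powerset.1 hT h)
          have heT' : e ∈ insert e T := Finset.mem_insert_self e T
          rw [proc, dif_pos hRm, dif_neg hP]
          dsimp only
          rw [if_pos heT', if_pos heT']
          have hcongr : M.proc lam (insert e T) (Rm.erase e) (insert e R) =
              M.proc lam T (Rm.erase e) (insert e R) := by
            apply proc_congr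
            intro x hx
            have hxe : x ≠ e := Finset.ne_of_mem_erase hx
            simp [Finset.mem_insert, hxe]
          rw [hcongr]
          have hnotmem : e ∉ (M.proc lam T (Rm.erase e) (insert e R)).1 :=
            fun h => he ((proc_subset T (Rm.erase e) (insert e R)).1 h)
          rw [Finset.card_insert_of_notMem hnotmem]
          omega
    · -- Rm = ∅
      rw [Finset.not_nonempty_iff_eq_empty.1 hRm]
      refine le_trans (Finset.card_filter_le _ _) ?_
      simp only [Finset.powerset_empty, Finset.card_singleton, Finset.card_empty]
      calc 1 = Nat.choose 0 0 := rfl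
        _ ≤ ∑ j ∈ Finset.range (k + 1), Nat.choose 0 j :=
          Finset.single_le_sum (fun i _ => Nat.zero_le _) (Finset.mem_range.2 (Nat.succ_pos k))

end FinMatroid
lemma exp_key_ineq : Real.exp (5 / 72) + Real.exp (-(7 / 72)) ≤ 2 * Real.exp (-(1 / 144)) := by
  have e1 : Real.exp (5 / 72) ≤ 72 / 67 := by
    have h2 : (67 / 72 : ℝ) ≤ Real.exp (-(5 / 72)) := by
      have := Real.add_one_le_exp (-(5 / 72) : ℝ); linarith
    have h3 : (0:ℝ) < 67 / 72 := by norm_num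
    have h4 : Real.exp (5 / 72) = (Real.exp (-(5 / 72)))⁻¹ := by
      rw [Real.exp_neg, inv_inv]
    rw [h4]
    calc (Real.exp (-(5 / 72)))⁻¹ ≤ ((67:ℝ) / 72)⁻¹ := inv_anti₀ h3 h2
      _ = 72 / 67 := by norm_num
  have e2 : Real.exp (-(7 / 72)) ≤ 72 / 79 := by
    have h2 : (79 / 72 : ℝ) ≤ Real.exp (7 / 72) := by
      have := Real.add_one_le_exp ((7 / 72) : ℝ); linarith
    have h3 : (0:ℝ) < 79 / 72 := by norm_num
    rw [Real.exp_neg]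
    calc (Real.exp (7 / 72))⁻¹ ≤ ((79:ℝ) / 72)⁻¹ := inv_anti₀ h3 h2
      _ = 72 / 79 := by norm_num
  have e3 : (2:ℝ) - 1 / 72 ≤ 2 * Real.exp (-(1 / 144)) := by
    have := Real.add_one_le_exp (-(1 / 144) : ℝ); linarith
  have : (72:ℝ) / 67 + 72 / 79 ≤ 2 - 1 / 72 := by norm_num
  linarith

lemma binom_tail_bound (n k : ℕ) (hk : (k : ℝ) ≤ 5 * n / 12) :
    (∑ j ∈ Finset.range (k + 1), (n.choose j : ℝ)) ≤
      2 ^ n * Real.exp (-(n : ℝ) / 144) := by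
  set q : ℝ := Real.exp (-(1 / 6)) with hq
  have hq0 : 0 ≤ q := le_of_lt (Real.exp_pos _)
  have hkn : k ≤ n := by
    have hn : (k : ℝ) ≤ (n : ℝ) := le_trans hk (by
      have : (0:ℝ) ≤ (n:ℝ) := Nat.cast_nonneg n
      linarith)
    exact_mod_cast hn
  have S1 : (∑ j ∈ Finset.range (k + 1), (n.choose j : ℝ)) ≤
      ∑ j ∈ Finset.range (k + 1), (n.choose j : ℝ) * (Real.exp ((k : ℝ) / 6) * q ^ j) := by
    refine Finset.sum_le_sum fun j hj => ?_
    have hjk : j ≤ k := Nat.lt_succ_iff.1 (Finset.mem_range.1 hj)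
    have hterm : Real.exp ((k : ℝ) / 6) * q ^ j = Real.exp (((k : ℝ) - j) / 6) := by
      rw [hq, ← Real.exp_nat_mul, ← Real.exp_add]
      congr 1
      ring
    rw [hterm]
    refine le_mul_of_one_le_right (Nat.cast_nonneg _) ?_
    rw [← Real.exp_zero]
    apply Real.exp_le_exp.2
    have : (j : ℝ) ≤ (k : ℝ) := Nat.cast_le.2 hjk
    linarith
  have S2 : (∑ j ∈ Finset.range (k + 1), (n.choose j : ℝ) * (Real.exp ((k : ℝ) / 6) * q ^ j)) =
      Real.exp ((k : ℝ) / 6) * ∑ j ∈ Finset.range (k + 1), (n.choose j : ℝ) * q ^ j := by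
    rw [Finset.mul_sum]
    refine Finset.sum_congr rfl fun j _ => by ring
  have S3 : (∑ j ∈ Finset.range (k + 1), (n.choose j : ℝ) * q ^ j) ≤
      ∑ j ∈ Finset.range (n + 1), (n.choose j : ℝ) * q ^ j := by
    refine Finset.sum_le_sum_of_subset_of_nonneg
      (Finset.range_subset_range.2 (Nat.succ_le_succ hkn)) fun j _ _ => ?_
    positivity
  have S4 : (∑ j ∈ Finset.range (n + 1), (n.choose j : ℝ) * q ^ j) = (q + 1) ^ n := by
    rw [add_pow]
    refine Finset.sum_congr rfl fun j _ => by ring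
  have S5 : Real.exp ((k : ℝ) / 6) ≤ Real.exp ((5 * n / 72 : ℝ)) := by
    apply Real.exp_le_exp.2
    linarith
  have hqn : (0:ℝ) ≤ (q + 1) ^ n := by positivity
  have S6 : Real.exp ((5 * (n:ℝ) / 72 : ℝ)) * (q + 1) ^ n =
      (Real.exp (5 / 72) * (q + 1)) ^ n := by
    rw [mul_pow, ← Real.exp_nat_mul]
    congr 1
    ring
  have S7 : Real.exp (5 / 72) * (q + 1) = Real.exp (5 / 72) + Real.exp (-(7 / 72)) := by
    rw [hq, mul_add, mul_one, ← Real.exp_add]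
    norm_num
    ring
  have S8 : (Real.exp (5 / 72) * (q + 1)) ^ n ≤ (2 * Real.exp (-(1 / 144))) ^ n := by
    apply pow_le_pow_left₀
    · positivity
    · rw [S7]; exact exp_key_ineq
  have S9 : (2 * Real.exp (-(1 / 144) : ℝ)) ^ n = 2 ^ n * Real.exp (-(n : ℝ) / 144) := by
    rw [mul_pow, ← Real.exp_nat_mul]
    congr 1
    ring
  calc (∑ j ∈ Finset.range (k + 1), (n.choose j : ℝ))
      ≤ Real.exp ((k : ℝ) / 6) * ∑ j ∈ Finset.range (k + 1), (n.choose j : ℝ) * q ^ j := by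
        rw [← S2]; exact S1
    _ ≤ Real.exp ((k : ℝ) / 6) * ((q + 1) ^ n) := by
        rw [← S4]
        exact mul_le_mul_of_nonneg_left S3 (le_of_lt (Real.exp_pos _))
    _ ≤ Real.exp ((5 * (n:ℝ) / 72 : ℝ)) * ((q + 1) ^ n) :=
        mul_le_mul_of_nonneg_right S5 hqn
    _ = (Real.exp (5 / 72) * (q + 1)) ^ n := S6
    _ ≤ (2 * Real.exp (-(1 / 144))) ^ n := S8
    _ = 2 ^ n * Real.exp (-(n : ℝ) / 144) := S9
theorem statement6 {α : Type*} [DecidableEq α] (M : FinMatroid α) (h : ℕ) (hh : 1 ≤ h)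
    (Bs : Fin (3 * h) → Finset α)
    (hBsub : ∀ i, Bs i ⊆ M.E)
    (hBindep : ∀ i, M.r (Bs i) = (Bs i).card)
    (hBbasis : ∀ i, M.r (Bs i) = M.r M.E)
    (hBdisj : ∀ i j, i ≠ j → Disjoint (Bs i) (Bs j)) :
    prHalf M.E (fun S => ((M.span (M.D S (h : ℝ)) \ S).card : ℝ) ≤ (M.E.card : ℝ) / 12)
      ≤ Real.exp (-(M.E.card : ℝ) / 144) := by
  classical
  set n := M.E.card with hn
  -- `3 h r(E) ≤ n`, from the 3h disjoint bases
  have hBr : ∀ i, (Bs i).card = M.r M.E := fun i => by rw [← hBindep i, hBbasis i]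
  have hB3 : 3 * h * M.r M.E ≤ n := by
    have hdisj : ∀ i ∈ (Finset.univ : Finset (Fin (3 * h))),
        ∀ j ∈ (Finset.univ : Finset (Fin (3 * h))), i ≠ j → Disjoint (Bs i) (Bs j) :=
      fun i _ j _ hij => hBdisj i j hij
    have hcard := Finset.card_biUnion hdisj
    have hsub : (Finset.univ.biUnion Bs) ⊆ M.E := by
      intro x hx
      rcases Finset.mem_biUnion.1 hx with ⟨i, _, hxi⟩
      exact hBsub i hxi
    have hsum : ∑ i : Fin (3 * h), (Bs i).card = 3 * h * M.r M.E := by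
      have : ∀ i : Fin (3 * h), (Bs i).card = M.r M.E := hBr
      rw [Finset.sum_congr rfl fun i _ => this i]
      simp [Finset.sum_const, Finset.card_univ, mul_comm]
    calc 3 * h * M.r M.E = ∑ i : Fin (3 * h), (Bs i).card := hsum.symm
      _ = (Finset.univ.biUnion Bs).card := hcard.symm
      _ ≤ n := Finset.card_le_card hsub
  set k := n / 12 + h * M.r M.E with hkdef
  -- every set in the bad event has process score at most k
  have main : ∀ S ∈ M.E.powerset,
      (((M.span (M.D S (h : ℝ)) \ S).card : ℝ) ≤ (n : ℝ) / 12) →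
      (M.proc (h : ℝ) S M.E ∅).1.card + (M.proc (h : ℝ) S M.E ∅).2.card ≤ k := by
    intro S _ hbad
    have h2 := FinMatroid.proc_snd_spec (M := M) (Nat.cast_nonneg h) S M.E ∅
      (Finset.empty_subset S)
    have hcard2 : (M.proc (h : ℝ) S M.E ∅).2.card ≤ n / 12 := by
      have hc : ((M.proc (h : ℝ) S M.E ∅).2.card : ℝ) ≤ (n : ℝ) / 12 :=
        le_trans (Nat.cast_le.2 (Finset.card_le_card h2)) hbad
      have h12 : ((12 * (M.proc (h : ℝ) S M.E ∅).2.card : ℕ) : ℝ) ≤ (n : ℝ) := by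
        push_cast
        linarith
      have h12' : 12 * (M.proc (h : ℝ) S M.E ∅).2.card ≤ n := by exact_mod_cast h12
      omega
    have hgood : ∀ U ⊆ (∅ : Finset α) ∪ (M.proc (h : ℝ) S M.E ∅).1, U.card ≤ h * M.r U :=
      FinMatroid.proc_fst_sparse hh S M.E ∅ ∅ (Finset.Subset.refl M.E)
        (Finset.empty_subset S) (Finset.empty_subset ∅)
        (fun U hU => by
          rw [Finset.subset_empty.1 hU]
          simp)
    have hcard1 : (M.proc (h : ℝ) S M.E ∅).1.card ≤ h * M.r M.E := by
      have := hgood (M.proc (h : ℝ) S M.E ∅).1 (by rw [Finset.empty_union])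
      refine le_trans this (Nat.mul_le_mul_left h (M.rank_mono ?_))
      exact (FinMatroid.proc_subset S M.E ∅).1
    omega
  have hcount := FinMatroid.proc_count (M := M) (lam := (h : ℝ)) M.E ∅ k
  have hfilter : (M.E.powerset.filter fun S =>
        ((M.span (M.D S (h : ℝ)) \ S).card : ℝ) ≤ (M.E.card : ℝ) / 12).card ≤
      (M.E.powerset.filter fun T =>
        (M.proc (h : ℝ) T M.E ∅).1.card + (M.proc (h : ℝ) T M.E ∅).2.card ≤ k).card := by
    refine Finset.card_le_card fun S hS => ?_
    have hS' := Finset.mem_filter.1 hS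
    exact Finset.mem_filter.2 ⟨hS'.1, main S hS'.1 hS'.2⟩
  have hkr : (k : ℝ) ≤ 5 * n / 12 := by
    have c1 : ((n / 12 : ℕ) : ℝ) ≤ (n : ℝ) / 12 := Nat.cast_div_le
    have c2 : ((h * M.r M.E : ℕ) : ℝ) ≤ (n : ℝ) / 3 := by
      have : ((3 * h * M.r M.E : ℕ) : ℝ) ≤ (n : ℝ) := Nat.cast_le.2 hB3
      push_cast at this ⊢
      linarith
    rw [hkdef]
    push_cast
    push_cast at c1 c2
    linarith
  have htail := binom_tail_bound n k hkr
  rw [prHalf]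
  rw [div_le_iff₀ (by positivity : (0:ℝ) < 2 ^ M.E.card)]
  have hchain : ((M.E.powerset.filter fun S =>
        ((M.span (M.D S (h : ℝ)) \ S).card : ℝ) ≤ (M.E.card : ℝ) / 12).card : ℝ) ≤
      ∑ j ∈ Finset.range (k + 1), (n.choose j : ℝ) := by
    have hnat := le_trans hfilter hcount
    calc ((M.E.powerset.filter fun S =>
          ((M.span (M.D S (h : ℝ)) \ S).card : ℝ) ≤ (M.E.card : ℝ) / 12).card : ℝ)
        ≤ ((∑ j ∈ Finset.range (k + 1), n.choose j : ℕ) : ℝ) := Nat.cast_le.2 hnat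
      _ = ∑ j ∈ Finset.range (k + 1), (n.choose j : ℝ) := by push_cast; rfl
  calc ((M.E.powerset.filter fun S =>
        ((M.span (M.D S (h : ℝ)) \ S).card : ℝ) ≤ (M.E.card : ℝ) / 12).card : ℝ)
      ≤ ∑ j ∈ Finset.range (k + 1), (n.choose j : ℝ) := hchain
    _ ≤ 2 ^ n * Real.exp (-(n : ℝ) / 144) := htail
    _ = Real.exp (-(M.E.card : ℝ) / 144) * 2 ^ M.E.card := by rw [hn]; ring

end
end

section
/- Let M = (N, I) be a finite matroid that contains 3h pairwise disjoint bases for some integer h ≥ 1, and let S ⊆ N be a random subset containing each element of N independently with probability 1/2. Then Pr[ r(D_M(S, h)) ≤ r(N)/8 ] ≤ exp(−r(N)/48). -/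
open scoped BigOperators Classical
open MeasureTheory

noncomputable section

variable {α : Type*} [DecidableEq α]

section Aux

variable {α : Type*} [DecidableEq α]

lemma FinMatroid.card_le_rank_of_subset_indep (M : FinMatroid α) {B A : Finset α}
    (hB : M.r B = B.card) (hA : A ⊆ B) : A.card ≤ M.r A := by
  have hsub := M.rank_submod A (B \ A)
  rw [Finset.union_sdiff_of_subset hA, Finset.inter_sdiff_self] at hsub
  have h1 : M.r (B \ A) ≤ (B \ A).card := M.rank_le_card _
  have h2 : (B \ A).card + A.card = B.card := Finset.card_sdiff_add_card_eq_card hA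
  have h3 : M.r ∅ ≤ 0 := by simpa using M.rank_le_card ∅
  omega

lemma FinMatroid.D_spec (M : FinMatroid α) (S : Finset α) (lam : ℝ) (hlam : 0 ≤ lam) :
    M.D S lam ⊆ S ∧ ∀ V ⊆ S,
      (V.card : ℝ) - lam * M.r V ≤ (((M.D S lam).card : ℝ) - lam * M.r (M.D S lam)) := by
  set A : Finset (Finset α) := S.powerset.filter (fun U =>
      ∀ V ∈ S.powerset, (V.card : ℝ) - lam * M.r V ≤ (U.card : ℝ) - lam * M.r U) with hA
  have hne : A.Nonempty := by
    obtain ⟨U₀, hU₀, hmax⟩ := Finset.exists_max_image S.powerset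
      (fun U => (U.card : ℝ) - lam * M.r U) ⟨∅, by simp⟩
    exact ⟨U₀, Finset.mem_filter.mpr ⟨hU₀, hmax⟩⟩
  have hclosed : ∀ x ∈ (↑A : Set (Finset α)), ∀ y ∈ (↑A : Set (Finset α)),
      x ⊔ y ∈ (↑A : Set (Finset α)) := by
    intro x hx y hy
    rw [Finset.mem_coe, hA, Finset.mem_filter, Finset.mem_powerset] at hx hy ⊢
    obtain ⟨hxS, hxmax⟩ := hx
    obtain ⟨hyS, hymax⟩ := hy
    have hxyS : x ⊔ y ⊆ S := Finset.union_subset hxS hyS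
    have hinter : ((x ∩ y).card : ℝ) - lam * M.r (x ∩ y) ≤ (x.card : ℝ) - lam * M.r x :=
      hxmax _ (Finset.mem_powerset.mpr ((Finset.inter_subset_left).trans hxS))
    have hcard : ((x ∪ y).card : ℝ) + ((x ∩ y).card : ℝ) = (x.card : ℝ) + (y.card : ℝ) := by
      exact_mod_cast congrArg (Nat.cast : ℕ → ℝ) (Finset.card_union_add_card_inter x y)
    have hrk : lam * M.r (x ∪ y) + lam * M.r (x ∩ y) ≤ lam * M.r x + lam * M.r y := by
      rw [← mul_add, ← mul_add]
      have h0 : (M.r (x ∪ y) : ℝ) + (M.r (x ∩ y) : ℝ) ≤ (M.r x : ℝ) + (M.r y : ℝ) := by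
        exact_mod_cast M.rank_submod x y
      exact mul_le_mul_of_nonneg_left h0 hlam
    have hval : (y.card : ℝ) - lam * M.r y ≤ ((x ⊔ y).card : ℝ) - lam * M.r (x ⊔ y) := by
      have hxy : x ⊔ y = x ∪ y := rfl
      rw [hxy]; linarith
    exact ⟨hxyS, fun V hV => (hymax V hV).trans hval⟩
  have hDmem : M.D S lam ∈ A := by
    have hsup := Finset.sup'_mem (↑A : Set (Finset α)) hclosed A hne id (fun i hi => hi)
    rw [Finset.sup'_eq_sup hne id] at hsup
    exact hsup
  rw [hA, Finset.mem_filter, Finset.mem_powerset] at hDmem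
  exact ⟨hDmem.1, fun V hV => hDmem.2 V (Finset.mem_powerset.mpr hV)⟩

lemma sum_pow_card_inter (E B : Finset α) (hBE : B ⊆ E) (x : ℝ) :
    ∑ S ∈ E.powerset, x ^ (S ∩ B).card = (x + 1) ^ B.card * 2 ^ (E \ B).card := by
  have key := Finset.prod_add (fun e => if e ∈ B then x else (1:ℝ)) (fun _ => (1:ℝ)) E
  have lhs : ∏ e ∈ E, ((if e ∈ B then x else (1:ℝ)) + 1)
      = (x + 1) ^ B.card * 2 ^ (E \ B).card := by
    rw [Finset.prod_congr rfl (fun e _ => show (if e ∈ B then x else (1:ℝ)) + 1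
        = if e ∈ B then x + 1 else 2 by split <;> norm_num)]
    rw [Finset.prod_ite (fun _ => x + 1) (fun _ => (2:ℝ)), Finset.prod_const, Finset.prod_const]
    congr 2
    · rw [Finset.filter_mem_eq_inter, Finset.inter_eq_right.mpr hBE]
    · rw [← Finset.sdiff_eq_filter]
  have rhs : ∀ S ∈ E.powerset,
      (∏ e ∈ S, (if e ∈ B then x else (1:ℝ))) * (∏ _e ∈ E \ S, (1:ℝ)) = x ^ (S ∩ B).card := by
    intro S _
    rw [Finset.prod_const_one, mul_one,
      Finset.prod_ite (fun _ => x) (fun _ => (1:ℝ)), Finset.prod_const, Finset.prod_const,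
      one_pow, mul_one, Finset.filter_mem_eq_inter]
  rw [lhs, Finset.sum_congr rfl rhs] at key
  exact key.symm

end Aux

theorem statement7 {α : Type*} [DecidableEq α] (M : FinMatroid α) (h : ℕ) (hh : 1 ≤ h)
    (Bs : Fin (3 * h) → Finset α)
    (hBsub : ∀ i, Bs i ⊆ M.E)
    (hBindep : ∀ i, M.r (Bs i) = (Bs i).card)
    (hBbasis : ∀ i, M.r (Bs i) = M.r M.E)
    (hBdisj : ∀ i j, i ≠ j → Disjoint (Bs i) (Bs j)) :
    prHalf M.E (fun S => (M.r (M.D S (h : ℝ)) : ℝ) ≤ (M.r M.E : ℝ) / 8)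
      ≤ Real.exp (-(M.r M.E : ℝ) / 48) := by
  have hh1 : (1:ℝ) ≤ (h:ℝ) := by exact_mod_cast hh
  set rE := M.r M.E with hrEdef
  set B : Finset α := Finset.univ.biUnion Bs with hBdef
  have hBE : B ⊆ M.E := by
    intro e he
    rw [hBdef, Finset.mem_biUnion] at he
    obtain ⟨i, _, hi⟩ := he
    exact hBsub i hi
  have hcardBi : ∀ i, (Bs i).card = rE := fun i => by rw [← hBindep i, hBbasis i]
  have hcardB : B.card = 3 * h * rE := by
    rw [hBdef, Finset.card_biUnion (fun i _ j _ hij => hBdisj i j hij)]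
    rw [Finset.sum_congr rfl (fun i _ => hcardBi i), Finset.sum_const, Finset.card_univ,
      Fintype.card_fin, smul_eq_mul]
  have hrEnn : (0:ℝ) ≤ (rE:ℝ) := Nat.cast_nonneg _
  -- deterministic step
  have hdet : ∀ S ∈ M.E.powerset, ((M.r (M.D S (h:ℝ)) : ℝ) ≤ (rE:ℝ)/8) →
      (((S ∩ B).card : ℝ) ≤ 5/4 * (h:ℝ) * (rE:ℝ)) := by
    intro S hS hev
    rw [Finset.mem_powerset] at hS
    obtain ⟨hUS, hUmax⟩ := M.D_spec S (h:ℝ) (by positivity)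
    set U := M.D S (h:ℝ) with hUdef
    set X := S ∩ B with hXdef
    have hXS : X ⊆ S := Finset.inter_subset_left
    have hVal := hUmax (U ∪ X) (Finset.union_subset hUS hXS)
    have hcardV : ((U ∪ X).card : ℝ) = (U.card : ℝ) + ((X \ U).card : ℝ) := by
      rw [← Finset.union_sdiff_self_eq_union, Finset.card_union_of_disjoint Finset.disjoint_sdiff]
      push_cast; ring
    have hrV : M.r (U ∪ X) ≤ rE :=
      M.rank_mono (Finset.union_subset (hUS.trans hS) ((hXS).trans hS))
    have hrUV : M.r U ≤ M.r (U ∪ X) := M.rank_mono Finset.subset_union_left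
    -- |X ∩ U| ≤ 3h · r(U)
    have hXU : (X ∩ U).card ≤ 3 * h * M.r U := by
      have hsub : X ∩ U ⊆ Finset.univ.biUnion (fun i => Bs i ∩ U) := by
        intro e he
        rw [Finset.mem_inter, hXdef, Finset.mem_inter, hBdef, Finset.mem_biUnion] at he
        obtain ⟨⟨_, ⟨i, _, hi⟩⟩, heU⟩ := he
        exact Finset.mem_biUnion.mpr ⟨i, Finset.mem_univ i, Finset.mem_inter.mpr ⟨hi, heU⟩⟩
      calc (X ∩ U).card ≤ (Finset.univ.biUnion (fun i => Bs i ∩ U)).card :=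
              Finset.card_le_card hsub
        _ = ∑ i, (Bs i ∩ U).card := Finset.card_biUnion (fun i _ j _ hij =>
              Finset.disjoint_left.mpr (fun a ha hb =>
                (Finset.disjoint_left.mp (hBdisj i j hij))
                  (Finset.mem_inter.mp ha).1 (Finset.mem_inter.mp hb).1))
        _ ≤ ∑ _i : Fin (3*h), M.r U := Finset.sum_le_sum (fun i _ =>
              (M.card_le_rank_of_subset_indep (hBindep i) Finset.inter_subset_left).trans
                (M.rank_mono Finset.inter_subset_right))
        _ = 3 * h * M.r U := by
              rw [Finset.sum_const, Finset.card_univ, Fintype.card_fin, smul_eq_mul]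
    have hsplit : ((X \ U).card : ℝ) + ((X ∩ U).card : ℝ) = (X.card : ℝ) := by
      exact_mod_cast congrArg (Nat.cast : ℕ → ℝ) (Finset.card_sdiff_add_card_inter X U)
    have e1 : ((X \ U).card : ℝ) ≤ (h:ℝ) * (M.r (U ∪ X) : ℝ) - (h:ℝ) * (M.r U : ℝ) := by
      rw [hcardV] at hVal; linarith
    have e2 : (h:ℝ) * (M.r (U ∪ X) : ℝ) ≤ (h:ℝ) * (rE:ℝ) :=
      mul_le_mul_of_nonneg_left (by exact_mod_cast hrV) (by positivity)
    have e3 : ((X ∩ U).card : ℝ) ≤ 3 * (h:ℝ) * (M.r U : ℝ) := by exact_mod_cast hXU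
    have e4 : (h:ℝ) * (M.r U : ℝ) ≤ (h:ℝ) * ((rE:ℝ)/8) :=
      mul_le_mul_of_nonneg_left hev (by positivity)
    linarith
  -- counting step
  simp only [prHalf]
  set F := M.E.powerset.filter
      (fun S => (M.r (M.D S (h:ℝ)) : ℝ) ≤ (rE : ℝ) / 8) with hFdef
  set c : ℝ := 5/4 * (h:ℝ) * (rE:ℝ) with hcdef
  have hterm_nonneg : ∀ S : Finset α, (0:ℝ) ≤ (7/5:ℝ) ^ c * (5/7:ℝ) ^ (S ∩ B).card :=
    fun S => mul_nonneg (Real.rpow_nonneg (by norm_num) _) (pow_nonneg (by norm_num) _)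
  have hFle : (F.card : ℝ) ≤ ∑ S ∈ M.E.powerset, (7/5:ℝ) ^ c * (5/7:ℝ) ^ (S ∩ B).card := by
    calc (F.card : ℝ) = ∑ _S ∈ F, (1:ℝ) := by simp
      _ ≤ ∑ S ∈ F, (7/5:ℝ) ^ c * (5/7:ℝ) ^ (S ∩ B).card := by
          apply Finset.sum_le_sum
          intro S hS
          rw [hFdef, Finset.mem_filter] at hS
          have hk : ((S ∩ B).card : ℝ) ≤ c := hdet S hS.1 hS.2
          have p1 : (7/5:ℝ) ^ (((S ∩ B).card : ℕ) : ℝ) ≤ (7/5:ℝ) ^ c := by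
            rw [Real.rpow_le_rpow_left_iff (by norm_num : (1:ℝ) < 7/5)]
            exact hk
          rw [Real.rpow_natCast] at p1
          have p2 : (7/5:ℝ) ^ ((S ∩ B).card) * (5/7:ℝ) ^ ((S ∩ B).card) = 1 := by
            rw [← mul_pow]; norm_num
          have p3 := mul_le_mul_of_nonneg_right p1
            (pow_nonneg (by norm_num : (0:ℝ) ≤ 5/7) ((S ∩ B).card))
          linarith
      _ ≤ ∑ S ∈ M.E.powerset, (7/5:ℝ) ^ c * (5/7:ℝ) ^ (S ∩ B).card :=
          Finset.sum_le_sum_of_subset_of_nonneg (Finset.filter_subset _ _)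
            (fun S _ _ => hterm_nonneg S)
  have hsum : ∑ S ∈ M.E.powerset, (7/5:ℝ) ^ c * (5/7:ℝ) ^ (S ∩ B).card
      = (7/5:ℝ) ^ c * ((5/7 + 1:ℝ) ^ B.card * 2 ^ (M.E \ B).card) := by
    rw [← Finset.mul_sum, sum_pow_card_inter M.E B hBE (5/7)]
  have h2E : (2:ℝ) ^ M.E.card = 2 ^ B.card * 2 ^ (M.E \ B).card := by
    rw [← pow_add]
    congr 1
    have := Finset.card_sdiff_add_card_eq_card hBE
    omega
  have hfinal : (7/5:ℝ) ^ c * (6/7:ℝ) ^ B.card ≤ Real.exp (-(rE:ℝ) / 48) := by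
    have hlogkey : 5 * Real.log (7/5) + 12 * Real.log (6/7) ≤ -(1/12) := by
      have hz : ((7:ℝ)/5) ^ (5:ℕ) * ((6:ℝ)/7) ^ (12:ℕ) ≤ 11/12 := by norm_num
      have hzpos : (0:ℝ) < ((7:ℝ)/5) ^ (5:ℕ) * ((6:ℝ)/7) ^ (12:ℕ) := by positivity
      have hexp : (11:ℝ)/12 ≤ Real.exp (-(1/12)) := by
        have := Real.add_one_le_exp (-(1/12):ℝ); linarith
      have hlog : Real.log (((7:ℝ)/5) ^ (5:ℕ) * ((6:ℝ)/7) ^ (12:ℕ)) ≤ -(1/12) :=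
        (Real.log_le_iff_le_exp hzpos).mpr (hz.trans hexp)
      rw [Real.log_mul (by positivity) (by positivity), Real.log_pow, Real.log_pow] at hlog
      push_cast at hlog
      linarith
    have e67 : ((6:ℝ)/7) ^ B.card = Real.exp ((B.card : ℝ) * Real.log (6/7)) := by
      rw [Real.exp_nat_mul, Real.exp_log (by norm_num : (0:ℝ) < 6/7)]
    rw [Real.rpow_def_of_pos (by norm_num : (0:ℝ) < 7/5), e67, ← Real.exp_add, Real.exp_le_exp,
      hcardB, hcdef]
    push_cast
    have hK : 5/4 * Real.log (7/5) + 3 * Real.log (6/7) ≤ -(1/48) := by linarith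
    have hHR : (0:ℝ) ≤ (h:ℝ) * (rE:ℝ) := by positivity
    have hmul := mul_le_mul_of_nonneg_left hK hHR
    have hRle : (rE:ℝ) ≤ (h:ℝ) * (rE:ℝ) := le_mul_of_one_le_left hrEnn hh1
    nlinarith [hmul, hRle]
  calc (F.card : ℝ) / 2 ^ M.E.card
      ≤ ((7/5:ℝ) ^ c * ((5/7 + 1:ℝ) ^ B.card * 2 ^ (M.E \ B).card)) / 2 ^ M.E.card := by
        apply div_le_div_of_nonneg_right ?_ ?_ |>.trans_eq rfl
        · exact hsum ▸ hFle
        · positivity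
    _ = (7/5:ℝ) ^ c * (6/7:ℝ) ^ B.card := by
        rw [h2E, show ((5:ℝ)/7 + 1) = 12/7 by norm_num,
          show ((6:ℝ)/7) ^ B.card = ((12:ℝ)/7) ^ B.card / 2 ^ B.card by
            rw [← div_pow]; norm_num]
        field_simp
    _ ≤ Real.exp (-(rE:ℝ) / 48) := hfinal

end
end

section
/- Let M = (N, I) be a finite matroid with rank function r, let h ≥ 1 be an integer, and define r_h : 2^N → ℤ≥0 by r_h(U) := min_{B ⊆ U} ( |U ∖ B| + h·r(B) ) (this is the rank function of the h-fold matroid union of M, by the Nash-Williams formula). Let Q ⊆ N and e ∈ N ∖ Q be such that r_h(Q ∪ {e}) = r_h(Q). Then e ∈ span(D_M(Q, h)). -/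
open scoped BigOperators Classical
open MeasureTheory

noncomputable section

variable {α : Type*} [DecidableEq α]

/-- The rank function of the `h`-fold matroid union of `M`, via the
Nash-Williams formula. -/
def FinMatroid.rUnion (M : FinMatroid α) (h : ℕ) (U : Finset α) : ℕ :=
  U.powerset.inf' (Finset.powerset_nonempty U) fun B => (U \ B).card + h * M.r B

/-- `U` is a maximizer of `|V| - lam * r V` over subsets of `S`. -/
def goodSet (M : FinMatroid α) (S : Finset α) (lam : ℝ) (U : Finset α) : Prop :=
  U ⊆ S ∧ ∀ V ⊆ S, (V.card : ℝ) - lam * M.r V ≤ (U.card : ℝ) - lam * M.r U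

lemma goodSet_union (M : FinMatroid α) (S : Finset α) (lam : ℝ) (hlam : 0 ≤ lam)
    {U V : Finset α} (hU : goodSet M S lam U) (hV : goodSet M S lam V) :
    goodSet M S lam (U ∪ V) := by
  obtain ⟨hUS, hUmax⟩ := hU
  obtain ⟨hVS, hVmax⟩ := hV
  refine ⟨Finset.union_subset hUS hVS, fun W hW => ?_⟩
  have hsub' : (M.r (U ∪ V) : ℝ) + M.r (U ∩ V) ≤ M.r U + M.r V := by
    exact_mod_cast M.rank_submod U V
  have hcard' : ((U ∪ V).card : ℝ) + (U ∩ V).card = U.card + V.card := by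
    exact_mod_cast Finset.card_union_add_card_inter U V
  have h1 := hUmax (U ∩ V) (Finset.inter_subset_left.trans hUS)
  have h2 := hVmax W hW
  have hmul := mul_le_mul_of_nonneg_left hsub' hlam
  rw [mul_add, mul_add] at hmul
  linarith

lemma mem_D_filter_iff (M : FinMatroid α) (S : Finset α) (lam : ℝ) (U : Finset α) :
    U ∈ (S.powerset.filter fun U =>
      ∀ V ∈ S.powerset, (V.card : ℝ) - lam * M.r V ≤ (U.card : ℝ) - lam * M.r U) ↔
    goodSet M S lam U := by
  simp only [Finset.mem_filter, Finset.mem_powerset, goodSet]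

lemma subset_D (M : FinMatroid α) (S : Finset α) (lam : ℝ) {U : Finset α}
    (hU : goodSet M S lam U) : U ⊆ M.D S lam := by
  have := Finset.le_sup (f := id) ((mem_D_filter_iff M S lam U).2 hU)
  exact this

lemma goodSet_D (M : FinMatroid α) (S : Finset α) (lam : ℝ) (hlam : 0 ≤ lam) :
    goodSet M S lam (M.D S lam) := by
  classical
  obtain ⟨W, hWmem, hWmax⟩ :=
    S.powerset.exists_max_image (fun U => (U.card : ℝ) - lam * M.r U) (S.powerset_nonempty)
  have hWgood : goodSet M S lam W := by
    refine ⟨Finset.mem_powerset.1 hWmem, fun V hV => ?_⟩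
    exact hWmax V (Finset.mem_powerset.2 hV)
  have hp : goodSet M S lam (M.D S lam) ∨ M.D S lam = ∅ := by
    rw [FinMatroid.D]
    refine Finset.sup_induction (p := fun U => goodSet M S lam U ∨ U = ∅)
      (Or.inr Finset.bot_eq_empty) ?_ ?_
    · rintro U (hU | rfl) V (hV | rfl)
      · exact Or.inl (goodSet_union M S lam hlam hU hV)
      · rw [Finset.sup_eq_union]; simpa using Or.inl hU
      · rw [Finset.sup_eq_union]; simpa using Or.inl hV
      · rw [Finset.sup_eq_union]; simp
    · intro U hU
      exact Or.inl ((mem_D_filter_iff M S lam U).1 hU)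
  rcases hp with hp | hp
  · exact hp
  · have hWD : W ⊆ M.D S lam := subset_D M S lam hWgood
    rw [hp] at hWD
    have : W = ∅ := Finset.subset_empty.1 hWD
    rw [hp, ← this]
    exact hWgood

theorem statement8 {α : Type*} [DecidableEq α] (M : FinMatroid α) (h : ℕ) (hh : 1 ≤ h)
    (Q : Finset α) (hQ : Q ⊆ M.E) (e : α) (he : e ∈ M.E) (heQ : e ∉ Q)
    (heq : M.rUnion h (insert e Q) = M.rUnion h Q) :
    e ∈ M.span (M.D Q (h : ℝ)) := by
  classical
  -- extract a minimizer B for insert e Q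
  obtain ⟨B, hBmem, hBval⟩ :=
    Finset.exists_mem_eq_inf' (Finset.powerset_nonempty (insert e Q))
      (fun B => ((insert e Q) \ B).card + h * M.r B)
  have hBsub : B ⊆ insert e Q := Finset.mem_powerset.1 hBmem
  have hQle : ∀ B' ⊆ Q, M.rUnion h Q ≤ (Q \ B').card + h * M.r B' := by
    intro B' hB'
    exact Finset.inf'_le _ (Finset.mem_powerset.2 hB')
  -- e must be in B
  have heB : e ∈ B := by
    by_contra heB
    have hBQ : B ⊆ Q := fun x hx => by
      rcases Finset.mem_insert.1 (hBsub hx) with rfl | hxQ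
      · exact absurd hx heB
      · exact hxQ
    have hdiff : (insert e Q) \ B = insert e (Q \ B) := by
      ext x
      simp only [Finset.mem_sdiff, Finset.mem_insert]
      constructor
      · rintro ⟨rfl | hxQ, hxB⟩
        · exact Or.inl rfl
        · exact Or.inr ⟨hxQ, hxB⟩
      · rintro (rfl | ⟨hxQ, hxB⟩)
        · exact ⟨Or.inl rfl, heB⟩
        · exact ⟨Or.inr hxQ, hxB⟩
    have hcard : ((insert e Q) \ B).card = (Q \ B).card + 1 := by
      rw [hdiff, Finset.card_insert_of_notMem (fun hx => heQ (Finset.mem_sdiff.1 hx).1)]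
    have h1 := hQle B hBQ
    have hBval' : M.rUnion h (insert e Q) = ((insert e Q) \ B).card + h * M.r B := hBval
    have h2 : M.rUnion h (insert e Q) = (Q \ B).card + 1 + h * M.r B := by
      rw [hBval', hcard]
    omega
  -- set B0 := B.erase e
  set B0 := B.erase e with hB0def
  have hB0Q : B0 ⊆ Q := by
    intro x hx
    have hxB := Finset.mem_of_mem_erase hx
    have hxne := Finset.ne_of_mem_erase hx
    rcases Finset.mem_insert.1 (hBsub hxB) with rfl | hxQ
    · exact absurd rfl hxne
    · exact hxQ
  have hBins : B = insert e B0 := (Finset.insert_erase heB).symm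
  have heB0 : e ∉ B0 := Finset.notMem_erase e B
  have hdiff : (insert e Q) \ B = Q \ B0 := by
    ext x
    simp only [Finset.mem_sdiff, Finset.mem_insert, hB0def, Finset.mem_erase]
    constructor
    · rintro ⟨rfl | hxQ, hxB⟩
      · exact absurd heB hxB
      · exact ⟨hxQ, fun hc => hxB hc.2⟩
    · rintro ⟨hxQ, hx⟩
      refine ⟨Or.inr hxQ, fun hxB => hx ⟨fun hc => heQ (hc ▸ hxQ), hxB⟩⟩
  -- key inequality
  have hkey : ∀ B' ⊆ Q, (Q \ B0).card + h * M.r (insert e B0) ≤ (Q \ B').card + h * M.r B' := by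
    intro B' hB'
    have h1 := hQle B' hB'
    have hBval' : M.rUnion h (insert e Q) = ((insert e Q) \ B).card + h * M.r B := hBval
    have h2 : M.rUnion h Q = (Q \ B0).card + h * M.r (insert e B0) := by
      rw [← heq, hBval', hdiff, hBins]
    omega
  -- r (insert e B0) = r B0
  have hrB0 : M.r (insert e B0) = M.r B0 := by
    have h1 := hkey B0 hB0Q
    have h2 : M.r (insert e B0) ≤ M.r B0 := by
      have := Nat.le_of_add_le_add_left h1
      exact Nat.le_of_mul_le_mul_left this (by omega)
    exact le_antisymm h2 (M.rank_mono (Finset.subset_insert e B0))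
  -- B0 is a maximizer
  have hgoodB0 : goodSet M Q (h : ℝ) B0 := by
    refine ⟨hB0Q, fun V hV => ?_⟩
    have h1 := hkey V hV
    rw [hrB0] at h1
    have hc0 : (Q \ B0).card + B0.card = Q.card := Finset.card_sdiff_add_card_eq_card hB0Q
    have hcV : (Q \ V).card + V.card = Q.card := Finset.card_sdiff_add_card_eq_card hV
    have h1' : ((Q \ B0).card : ℝ) + (h : ℝ) * M.r B0 ≤ ((Q \ V).card : ℝ) + (h : ℝ) * M.r V := by
      exact_mod_cast h1
    have hc0' : ((Q \ B0).card : ℝ) + B0.card = Q.card := by exact_mod_cast hc0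
    have hcV' : ((Q \ V).card : ℝ) + V.card = Q.card := by exact_mod_cast hcV
    linarith
  -- D facts
  set D := M.D Q (h : ℝ) with hDdef
  have hgoodD : goodSet M Q (h : ℝ) D := goodSet_D M Q (h : ℝ) (by positivity)
  have hB0D : B0 ⊆ D := subset_D M Q (h : ℝ) hgoodB0
  have hDQ : D ⊆ Q := hgoodD.1
  have heD : e ∉ D := fun hc => heQ (hDQ hc)
  -- r (insert e D) = r D via submodularity
  have hrD : M.r (insert e D) = M.r D := by
    have hsub := M.rank_submod (insert e B0) D
    have hunion : (insert e B0) ∪ D = insert e D := by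
      ext x
      simp only [Finset.mem_union, Finset.mem_insert]
      constructor
      · rintro ((rfl | hx) | hx)
        · exact Or.inl rfl
        · exact Or.inr (hB0D hx)
        · exact Or.inr hx
      · rintro (rfl | hx)
        · exact Or.inl (Or.inl rfl)
        · exact Or.inr hx
    have hinter : (insert e B0) ∩ D = B0 := by
      ext x
      simp only [Finset.mem_inter, Finset.mem_insert]
      constructor
      · rintro ⟨rfl | hx, hxD⟩
        · exact absurd hxD heD
        · exact hx
      · intro hx
        exact ⟨Or.inr hx, hB0D hx⟩
    rw [hunion, hinter, hrB0] at hsub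
    have h2 : M.r (insert e D) ≤ M.r D := by omega
    exact le_antisymm h2 (M.rank_mono (Finset.subset_insert e D))
  rw [FinMatroid.span, Finset.mem_filter]
  exact ⟨he, hrD⟩

end
end

section
/- Let M = (N, I) be a finite matroid with rank function r, let h ≥ 1 be an integer, and let B ⊆ N be the union of 3h pairwise disjoint bases of the restriction M|B (equivalently, B is a disjoint union of 3h independent sets of M, each of rank r(B)). Then for every subset A ⊆ B it holds that r(D_M(A, h)) ≥ (|A| − h·r(A)) / (2h). -/
open scoped BigOperators Classical
open MeasureTheory

noncomputable section

variable {α : Type*} [DecidableEq α]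

lemma rank_union_le_add_card (M : FinMatroid α) (S T : Finset α) :
    M.r (S ∪ T) ≤ M.r S + T.card := by
  classical
  induction T using Finset.induction_on with
  | empty => simpa using le_refl (M.r S)
  | @insert a T ha ih =>
    have h1 : S ∪ insert a T = {a} ∪ (S ∪ T) := by
      ext x; simp [Finset.mem_union, Finset.mem_insert]
    have h2 := M.rank_submod {a} (S ∪ T)
    have h3 : M.r {a} ≤ 1 := by simpa using M.rank_le_card {a}
    have h4 : (insert a T).card = T.card + 1 := Finset.card_insert_of_notMem ha
    rw [h1]
    omega

lemma rank_of_subset_indep (M : FinMatroid α) {S I : Finset α} (hSI : S ⊆ I)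
    (hI : M.r I = I.card) : M.r S = S.card := by
  classical
  have h1 : S ∪ (I \ S) = I := by
    ext x; simp [Finset.mem_union, Finset.mem_sdiff]; tauto
  have h2 := rank_union_le_add_card M S (I \ S)
  rw [h1] at h2
  have h3 : (I \ S).card = I.card - S.card := Finset.card_sdiff_of_subset hSI
  have h4 : S.card ≤ I.card := Finset.card_le_card hSI
  have h5 := M.rank_le_card S
  omega

theorem statement9 {α : Type*} [DecidableEq α] (M : FinMatroid α) (h : ℕ) (hh : 1 ≤ h)
    (B : Finset α) (hB : B ⊆ M.E)
    (Bs : Fin (3 * h) → Finset α)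
    (hunion : B = Finset.univ.biUnion fun i => Bs i)
    (hindep : ∀ i, M.r (Bs i) = (Bs i).card)
    (hsize : ∀ i, (Bs i).card = M.r B)
    (hdisj : ∀ i j, i ≠ j → Disjoint (Bs i) (Bs j)) :
    ∀ A ⊆ B, ((A.card : ℝ) - h * M.r A) / (2 * h) ≤ (M.r (M.D A (h : ℝ)) : ℝ) := by
  classical
  intro A hA
  set F := A.powerset.filter (fun U => ∀ V ∈ A.powerset,
      (V.card : ℝ) - (h : ℝ) * M.r V ≤ (U.card : ℝ) - (h : ℝ) * M.r U) with hFdef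
  have hFne : F.Nonempty := by
    obtain ⟨U, hU, hmax⟩ := A.powerset.exists_max_image
      (fun U => (U.card : ℝ) - (h : ℝ) * M.r U) ⟨∅, Finset.empty_mem_powerset A⟩
    exact ⟨U, Finset.mem_filter.mpr ⟨hU, hmax⟩⟩
  have hD : M.D A (h : ℝ) = F.sup' hFne id := by
    rw [FinMatroid.D, Finset.sup'_eq_sup]
  have hcast : (0 : ℝ) ≤ (h : ℝ) := by positivity
  have key : (M.D A (h : ℝ)) ⊆ A ∧ ∀ V ∈ A.powerset,
      (V.card : ℝ) - (h : ℝ) * M.r V ≤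
        ((M.D A (h : ℝ)).card : ℝ) - (h : ℝ) * M.r (M.D A (h : ℝ)) := by
    rw [hD]
    apply Finset.sup'_induction (p := fun U => U ⊆ A ∧ ∀ V ∈ A.powerset,
      (V.card : ℝ) - (h : ℝ) * M.r V ≤ (U.card : ℝ) - (h : ℝ) * M.r U)
    · rintro U ⟨hU, hUmax⟩ V ⟨hV, hVmax⟩
      have hsup : U ⊔ V = U ∪ V := rfl
      rw [hsup]
      have hUV : U ∪ V ⊆ A := Finset.union_subset hU hV
      constructor
      · exact hUV
      · intro W hW
        have h1 : (U ∪ V).card + (U ∩ V).card = U.card + V.card :=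
          Finset.card_union_add_card_inter U V
        have h2 := M.rank_submod U V
        have h2' : (h : ℝ) * (M.r (U ∪ V) + M.r (U ∩ V)) ≤ (h : ℝ) * (M.r U + M.r V) := by
          apply mul_le_mul_of_nonneg_left _ hcast
          exact_mod_cast h2
        have h3 : ((U ∩ V).card : ℝ) - (h : ℝ) * M.r (U ∩ V) ≤
            (V.card : ℝ) - (h : ℝ) * M.r V := by
          apply hVmax
          exact Finset.mem_powerset.mpr ((Finset.inter_subset_left).trans hU)
        have h4 := hUmax W hW
        have h1' : ((U ∪ V).card : ℝ) + ((U ∩ V).card : ℝ) = (U.card : ℝ) + (V.card : ℝ) := by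
          exact_mod_cast h1
        push_cast at h2' ⊢
        linarith
    · intro b hb
      rw [hFdef, Finset.mem_filter, Finset.mem_powerset] at hb
      exact ⟨hb.1, hb.2⟩
  obtain ⟨hDA, hDmax⟩ := key
  set D := M.D A (h : ℝ) with hDdef
  -- bound |D| ≤ 3h * r(D)
  have hDB : D ⊆ B := hDA.trans hA
  have hDeq : D = Finset.univ.biUnion (fun i => D ∩ Bs i) := by
    ext x
    simp only [Finset.mem_biUnion, Finset.mem_inter, Finset.mem_univ, true_and]
    constructor
    · intro hx
      have : x ∈ B := hDB hx
      rw [hunion] at this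
      simp only [Finset.mem_biUnion, Finset.mem_univ, true_and] at this
      obtain ⟨i, hi⟩ := this
      exact ⟨i, hx, hi⟩
    · rintro ⟨i, hx, _⟩; exact hx
  have hcard : D.card ≤ 3 * h * M.r D := by
    have h1 : D.card ≤ ∑ i : Fin (3 * h), (D ∩ Bs i).card := by
      conv_lhs => rw [hDeq]
      exact Finset.card_biUnion_le
    have h2 : ∀ i : Fin (3 * h), (D ∩ Bs i).card ≤ M.r D := by
      intro i
      have := rank_of_subset_indep M (Finset.inter_subset_right : D ∩ Bs i ⊆ Bs i) (hindep i)
      rw [← this]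
      exact M.rank_mono Finset.inter_subset_left
    calc D.card ≤ ∑ i : Fin (3 * h), (D ∩ Bs i).card := h1
      _ ≤ ∑ _i : Fin (3 * h), M.r D := Finset.sum_le_sum (fun i _ => h2 i)
      _ = 3 * h * M.r D := by simp [Finset.sum_const, mul_assoc]
  -- conclude
  have hAmax := hDmax A (Finset.mem_powerset_self A)
  have hcard' : (D.card : ℝ) ≤ 3 * (h : ℝ) * (M.r D : ℝ) := by exact_mod_cast hcard
  have hhpos : (0 : ℝ) < 2 * (h : ℝ) := by
    have : (1 : ℝ) ≤ (h : ℝ) := by exact_mod_cast hh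
    linarith
  rw [div_le_iff₀ hhpos]
  nlinarith [M.rank_le_card D, hcast]

end
end

section
/- Let M = (N, I) be a finite matroid with rank function r, let S ⊆ N, and let λ ∈ ℝ≥0. If U_1 ⊆ S and U_2 ⊆ S both maximize |U| − λ·r(U) over all U ⊆ S, then U_1 ∪ U_2 also maximizes |U| − λ·r(U) over all U ⊆ S. Consequently, there is a unique inclusion-wise maximal maximizer of |U| − λ·r(U) over U ⊆ S. -/
open scoped BigOperators Classical
open MeasureTheory

noncomputable section

variable {α : Type*} [DecidableEq α]

theorem statement13 {α : Type*} [DecidableEq α] (M : FinMatroid α)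
    (S : Finset α) (lam : ℝ) (hlam : 0 ≤ lam)
    (U1 U2 : Finset α) (hU1 : U1 ⊆ S) (hU2 : U2 ⊆ S)
    (hmax1 : ∀ V ⊆ S, (V.card : ℝ) - lam * M.r V ≤ (U1.card : ℝ) - lam * M.r U1)
    (hmax2 : ∀ V ⊆ S, (V.card : ℝ) - lam * M.r V ≤ (U2.card : ℝ) - lam * M.r U2) :
    (∀ V ⊆ S, (V.card : ℝ) - lam * M.r V ≤
        (((U1 ∪ U2).card : ℝ)) - lam * M.r (U1 ∪ U2)) ∧
    (∃! U : Finset α, (U ⊆ S ∧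
        ∀ V ⊆ S, (V.card : ℝ) - lam * M.r V ≤ (U.card : ℝ) - lam * M.r U) ∧
      ∀ V, (V ⊆ S ∧
          ∀ V' ⊆ S, (V'.card : ℝ) - lam * M.r V' ≤ (V.card : ℝ) - lam * M.r V) →
        V ⊆ U) := by
  -- `Max A` : A is a maximizer
  have key : ∀ A B : Finset α, A ⊆ S → B ⊆ S →
      (∀ V ⊆ S, (V.card : ℝ) - lam * M.r V ≤ (A.card : ℝ) - lam * M.r A) →
      (∀ V ⊆ S, (V.card : ℝ) - lam * M.r V ≤ (B.card : ℝ) - lam * M.r B) →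
      (∀ V ⊆ S, (V.card : ℝ) - lam * M.r V ≤
        ((A ∪ B).card : ℝ) - lam * M.r (A ∪ B)) := by
    intro A B hA hB hmA hmB V hV
    have hcard : ((A ∪ B).card : ℝ) + ((A ∩ B).card : ℝ) = (A.card : ℝ) + B.card := by
      exact_mod_cast congrArg (Nat.cast : ℕ → ℝ) (Finset.card_union_add_card_inter A B)
    have hsub : (M.r (A ∪ B) : ℝ) + (M.r (A ∩ B) : ℝ) ≤ (M.r A : ℝ) + M.r B := by
      exact_mod_cast M.rank_submod A B
    have hsub' : lam * M.r (A ∪ B) + lam * M.r (A ∩ B) ≤ lam * M.r A + lam * M.r B := by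
      nlinarith
    have hint : ((A ∩ B).card : ℝ) - lam * M.r (A ∩ B) ≤ (B.card : ℝ) - lam * M.r B :=
      hmB _ (Finset.inter_subset_right.trans hB)
    have hge : (A.card : ℝ) - lam * M.r A ≤ ((A ∪ B).card : ℝ) - lam * M.r (A ∪ B) := by
      linarith
    exact (hmA V hV).trans hge
  refine ⟨key U1 U2 hU1 hU2 hmax1 hmax2, ?_⟩
  classical
  set P : Finset α → Prop := fun U =>
    U ⊆ S ∧ ∀ V ⊆ S, (V.card : ℝ) - lam * M.r V ≤ (U.card : ℝ) - lam * M.r U with hP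
  set F : Finset (Finset α) := S.powerset.filter P with hF
  have hmemF : ∀ W, P W → W ∈ F := by
    intro W hW
    simp only [hF, Finset.mem_filter, Finset.mem_powerset]
    exact ⟨hW.1, hW⟩
  have hFmem : ∀ W ∈ F, P W := by
    intro W hW
    exact (Finset.mem_filter.mp hW).2
  -- sup of a nonempty set of maximizers is a maximizer
  have sup_max : ∀ F' : Finset (Finset α), F'.Nonempty → (∀ W ∈ F', P W) →
      P (F'.sup id) := by
    intro F' hne
    induction hne using Finset.Nonempty.cons_induction with
    | singleton a => intro h; simpa using h a (by simp)
    | cons a F' ha hne ih =>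
      intro h
      have hPa : P a := h a (Finset.mem_cons_self a F')
      have hPs : P (F'.sup id) := ih fun W hW => h W (Finset.mem_cons_of_mem hW)
      rw [Finset.sup_cons]
      have hsub : a ∪ F'.sup id ⊆ S := Finset.union_subset hPa.1 hPs.1
      exact ⟨hsub, key a (F'.sup id) hPa.1 hPs.1 hPa.2 hPs.2⟩
  have hU1P : P U1 := ⟨hU1, hmax1⟩
  have hFne : F.Nonempty := ⟨U1, hmemF U1 hU1P⟩
  have hPD : P (F.sup id) := sup_max F hFne hFmem
  refine ⟨F.sup id, ⟨hPD, fun V hV => ?_⟩, ?_⟩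
  · exact Finset.le_sup (f := id) (hmemF V hV)
  · rintro U ⟨hUP, hUmax⟩
    have h1 : U ⊆ F.sup id := Finset.le_sup (f := id) (hmemF U hUP)
    have h2 : F.sup id ⊆ U := hUmax _ hPD
    exact Finset.Subset.antisymm h1 h2

end
end
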